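/- arXiv:2101.11411 — 4 statements merged into one kernel-verified Lean document; each statement's English description precedes it below -/
import Mathlib

section
/- Let M : ℕ → ℝ be a weight sequence in the class LC satisfying moderate growth (mg), with m_p := M_p/p!. Then the following are equivalent: (i) there exist A ≥ 1 and a positive integer C such that (m_p)^{1/p} ≤ A·(m_q)^{1/q} for all p ≥ 1 and all q ≥ C·p; (ii) M is root almost increasing, i.e. there exists A ≥ 1 such that (m_p)^{1/p} ≤ A·(m_q)^{1/q} for all 1 ≤ p ≤ q; (iii) the weight matrix M_{ω_M} associated with ω_M satisfies (M_{rai}). -/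
open Filter Real Asymptotics

/-- The associated weight function of a weight sequence `M`. -/
noncomputable def omegaM (M : ℕ → ℝ) (t : ℝ) : ℝ :=
  if t = 0 then 0 else ⨆ p : ℕ, Real.log (t ^ p / M p)

/-- The class `LC`: positive, normalized, log-convex weight sequences whose
`p`-th roots tend to infinity. -/
def IsLC (M : ℕ → ℝ) : Prop :=
  (∀ p, 0 < M p) ∧ M 0 = 1 ∧ M 0 ≤ M 1 ∧
  (∀ p : ℕ, 1 ≤ p → (M p) ^ 2 ≤ M (p - 1) * M (p + 1)) ∧
  Filter.Tendsto (fun p : ℕ => (M p) ^ (1 / (p : ℝ))) Filter.atTop Filter.atTop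

/-- The quotient sequence `μ_0 = 1`, `μ_p = M_p / M_{p-1}`. -/
noncomputable def mu (M : ℕ → ℝ) (p : ℕ) : ℝ :=
  if p = 0 then 1 else M p / M (p - 1)

/-- Moderate growth `(mg)`. -/
def HasMG (M : ℕ → ℝ) : Prop :=
  ∃ C : ℝ, 1 ≤ C ∧ ∀ p q : ℕ, M (p + q) ≤ C ^ (p + q) * M p * M q

/-- `m_p := M_p / p!`. -/
noncomputable def mseq (M : ℕ → ℝ) (p : ℕ) : ℝ := M p / (Nat.factorial p)

/-- Young conjugate of `x ↦ ω_M(eˣ)`. -/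
noncomputable def phiStar (M : ℕ → ℝ) (y : ℝ) : ℝ :=
  sSup ((fun x => x * y - omegaM M (Real.exp x)) '' Set.Ici (0 : ℝ))

/-- The weight matrix associated with `ω_M`: `M^{(l)}_p := exp((1/l)·φ*(l·p))`. -/
noncomputable def MMat (M : ℕ → ℝ) (l : ℝ) (p : ℕ) : ℝ :=
  Real.exp ((1 / l) * phiStar M (l * p))

/-- `m^{(l)}_p := M^{(l)}_p / p!`. -/
noncomputable def mMat (M : ℕ → ℝ) (l : ℝ) (p : ℕ) : ℝ :=
  MMat M l p / (Nat.factorial p)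

/-- The Roumieu root-almost-increasing condition `(M_{rai})` for the weight matrix
associated with `ω_M`. -/
def MRai (M : ℕ → ℝ) : Prop :=
  ∀ x : ℝ, 0 < x → ∃ C : ℝ, 0 < C ∧ ∃ y : ℝ, 0 < y ∧
    ∀ p q : ℕ, 1 ≤ p → p ≤ q →
      (mMat M x p) ^ (1 / (p : ℝ)) ≤ C * (mMat M y q) ^ (1 / (q : ℝ))

/-- `M ≼ N` : `sup_{p ≥ 1} (M_p/N_p)^{1/p} < ∞`. -/
def Precsim (M N : ℕ → ℝ) : Prop :=
  ∃ A : ℝ, ∀ p : ℕ, 1 ≤ p → (M p / N p) ^ (1 / (p : ℝ)) ≤ A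

/-- `M ≈ N` : mutual `≼`. -/
def Approx (M N : ℕ → ℝ) : Prop := Precsim M N ∧ Precsim N M

/-- Condition `(ω1)` for a weight function. -/
def Omega1 (w : ℝ → ℝ) : Prop :=
  ∃ L : ℝ, 1 ≤ L ∧ ∀ t : ℝ, 0 ≤ t → w (2 * t) ≤ L * (w t + 1)

/-- Condition `(α0)` (in the rewritten form valid for all `t ≥ 0`). -/
def Alpha0 (w : ℝ → ℝ) : Prop :=
  ∃ C : ℝ, 1 ≤ C ∧ ∃ D : ℝ, 1 ≤ D ∧ ∀ lam : ℝ, 1 ≤ lam → ∀ t : ℝ, 0 ≤ t →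
    w (lam * t) ≤ C * lam * w t + D * lam

section Aux

variable {M : ℕ → ℝ}



variable {M : ℕ → ℝ}

lemma ratio_mono (hM : IsLC M) : Monotone fun p => M (p + 1) / M p := by
  apply monotone_nat_of_le_succ
  intro p
  have h := hM.2.2.2.1 (p + 1) (Nat.le_add_left 1 p)
  have h0 := hM.1 p
  have h1 := hM.1 (p + 1)
  have h2 := hM.1 (p + 2)
  simp only [Nat.add_sub_cancel] at h
  rw [div_le_div_iff₀ h0 h1]
  nlinarith

lemma lc_mono (hM : IsLC M) : Monotone M := by
  apply monotone_nat_of_le_succ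
  intro p
  have h := ratio_mono hM (Nat.zero_le p)
  simp only [hM.2.1, div_one] at h
  have h1 := hM.2.1 ▸ hM.2.2.1
  have h0 := hM.1 p
  have := (one_le_div h0).mp (le_trans h1 h)
  linarith

lemma lc_one_le (hM : IsLC M) (p : ℕ) : 1 ≤ M p := by
  have := lc_mono hM (Nat.zero_le p); rw [hM.2.1] at this; exact this

lemma g_bdd (hM : IsLC M) (x : ℝ) :
    BddAbove (Set.range fun p : ℕ => (p : ℝ) * x - Real.log (M p)) := by
  obtain ⟨N, hN⟩ := (Filter.tendsto_atTop.mp hM.2.2.2.2 (Real.exp x)).exists_forall_of_atTop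
  refine ⟨max ((Finset.range (N + 1)).sup' (by simp) fun p => (p : ℝ) * x - Real.log (M p)) 0, ?_⟩
  rintro _ ⟨p, rfl⟩
  rcases le_or_gt p N with hp | hp
  · exact le_max_of_le_left
      (Finset.le_sup' (fun p : ℕ => (p : ℝ) * x - Real.log (M p))
        (Finset.mem_range.mpr (Nat.lt_succ_of_le hp)))
  · have hp1 : p ≠ 0 := by omega
    have h1 : Real.exp x ≤ (M p) ^ ((p : ℝ)⁻¹) := by
      have := hN p (le_of_lt hp); rwa [one_div] at this
    have h2 : Real.exp x ^ p ≤ M p := by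
      calc Real.exp x ^ p ≤ ((M p) ^ ((p : ℝ)⁻¹)) ^ p :=
            pow_le_pow_left₀ (Real.exp_nonneg x) h1 p
        _ = M p := Real.rpow_inv_natCast_pow (hM.1 p).le hp1
    have h3 : (p : ℝ) * x ≤ Real.log (M p) := by
      have := Real.log_le_log (pow_pos (Real.exp_pos x) p) h2
      rwa [Real.log_pow, Real.log_exp] at this
    refine le_max_of_le_right ?_
    show (p : ℝ) * x - Real.log (M p) ≤ 0
    linarith

lemma omega_exp (hM : IsLC M) (x : ℝ) :
    omegaM M (Real.exp x) = ⨆ p : ℕ, ((p : ℝ) * x - Real.log (M p)) := by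
  rw [omegaM, if_neg (Real.exp_ne_zero x)]
  apply iSup_congr
  intro p
  rw [Real.log_div (pow_ne_zero _ (Real.exp_ne_zero x)) (hM.1 p).ne', Real.log_pow,
    Real.log_exp]

lemma g_le_phi (hM : IsLC M) (x : ℝ) (p : ℕ) :
    (p : ℝ) * x - Real.log (M p) ≤ omegaM M (Real.exp x) := by
  rw [omega_exp hM]; exact le_ciSup (g_bdd hM x) p

lemma phi_le (hM : IsLC M) (x : ℝ) {c : ℝ}
    (hc : ∀ p : ℕ, (p : ℝ) * x - Real.log (M p) ≤ c) : omegaM M (Real.exp x) ≤ c := by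
  rw [omega_exp hM]; exact ciSup_le hc

lemma phi_nonneg (hM : IsLC M) (x : ℝ) : 0 ≤ omegaM M (Real.exp x) := by
  have := g_le_phi hM x 0
  simpa [hM.2.1] using this

lemma phi_zero (hM : IsLC M) : omegaM M (Real.exp 0) = 0 := by
  refine le_antisymm (phi_le hM 0 fun p => ?_) (phi_nonneg hM 0)
  have := Real.log_nonneg (lc_one_le hM p)
  simp; linarith


lemma phiStar_bdd (hM : IsLC M) {y : ℝ} (hy : 0 ≤ y) :
    BddAbove ((fun x => x * y - omegaM M (Real.exp x)) '' Set.Ici (0 : ℝ)) := by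
  refine ⟨Real.log (M ⌈y⌉₊), ?_⟩
  rintro _ ⟨x, hx, rfl⟩
  have h1 := g_le_phi hM x ⌈y⌉₊
  have h2 : x * y ≤ x * (⌈y⌉₊ : ℝ) :=
    mul_le_mul_of_nonneg_left (Nat.le_ceil y) hx
  simp only []
  nlinarith

lemma le_phiStar (hM : IsLC M) {y : ℝ} (hy : 0 ≤ y) {x : ℝ} (hx : 0 ≤ x) :
    x * y - omegaM M (Real.exp x) ≤ phiStar M y :=
  le_csSup (phiStar_bdd hM hy) ⟨x, hx, rfl⟩

lemma phiStar_le' (hM : IsLC M) (y : ℝ) {c : ℝ}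
    (hc : ∀ x : ℝ, 0 ≤ x → x * y - omegaM M (Real.exp x) ≤ c) : phiStar M y ≤ c := by
  refine csSup_le ⟨_, ⟨0, Set.self_mem_Ici, rfl⟩⟩ ?_
  rintro _ ⟨x, hx, rfl⟩
  exact hc x hx

lemma phiStar_nonneg (hM : IsLC M) {y : ℝ} (hy : 0 ≤ y) : 0 ≤ phiStar M y := by
  have := le_phiStar hM hy (le_refl (0:ℝ))
  rw [phi_zero hM] at this
  linarith

lemma phiStar_le_logM (hM : IsLC M) (q : ℕ) : phiStar M (q : ℝ) ≤ Real.log (M q) := by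
  refine phiStar_le' hM _ fun x hx => ?_
  have h1 := g_le_phi hM x q
  nlinarith [mul_comm x (q : ℝ)]

lemma phiStar_mono (hM : IsLC M) {a b : ℝ} (ha : 0 ≤ a) (hab : a ≤ b) :
    phiStar M a ≤ phiStar M b := by
  refine phiStar_le' hM _ fun x hx => ?_
  have h1 := le_phiStar hM (ha.trans hab) hx
  have h2 : x * a ≤ x * b := mul_le_mul_of_nonneg_left hab hx
  linarith

lemma phiStar_scale (hM : IsLC M) {a b : ℝ} (ha : 0 < a) (hab : a ≤ b) :
    b * phiStar M a ≤ a * phiStar M b := by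
  have hb : 0 < b := ha.trans_le hab
  have key : phiStar M a ≤ (a / b) * phiStar M b := by
    refine phiStar_le' hM _ fun x hx => ?_
    have h1 := le_phiStar hM hb.le hx
    have h2 := phi_nonneg hM x
    have hd : 0 < a / b := div_pos ha hb
    have hd1 : a / b ≤ 1 := (div_le_one hb).mpr hab
    have h3 : (a / b) * (x * b - omegaM M (Real.exp x)) ≤ (a / b) * phiStar M b :=
      mul_le_mul_of_nonneg_left h1 hd.le
    have h4 : (a / b) * (x * b) = x * a := by field_simp
    nlinarith
  calc b * phiStar M a ≤ b * ((a / b) * phiStar M b) :=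
        mul_le_mul_of_nonneg_left key hb.le
    _ = a * phiStar M b := by field_simp

lemma ratio_pow_upper (hM : IsLC M) (s : ℕ) :
    ∀ k : ℕ, M (s + 1) * (M (s + 1) / M s) ^ k ≤ M (s + 1 + k) := by
  intro k
  induction k with
  | zero => simp
  | succ k ih =>
    have hr : M (s + 1) / M s ≤ M (s + 1 + k + 1) / M (s + 1 + k) :=
      ratio_mono hM (by omega)
    have h1 : 0 < M (s + 1 + k) := hM.1 _
    have h2 : 0 ≤ (M (s + 1) / M s) ^ k :=
      pow_nonneg (div_nonneg (hM.1 _).le (hM.1 _).le) k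
    have h3 : 0 ≤ M (s + 1) / M s := div_nonneg (hM.1 _).le (hM.1 _).le
    calc M (s + 1) * (M (s + 1) / M s) ^ (k + 1)
        = (M (s + 1) * (M (s + 1) / M s) ^ k) * (M (s + 1) / M s) := by ring
      _ ≤ M (s + 1 + k) * (M (s + 1 + k + 1) / M (s + 1 + k)) := by
          apply mul_le_mul ih hr h3 h1.le
      _ = M (s + 1 + (k + 1)) := by
          rw [mul_div_cancel₀ _ h1.ne']; ring_nf
  
lemma ratio_pow_lower (hM : IsLC M) (s : ℕ) :
    ∀ k : ℕ, k ≤ s + 1 → M (s + 1) ≤ M (s + 1 - k) * (M (s + 1) / M s) ^ k := by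
  intro k
  induction k with
  | zero => simp
  | succ k ih =>
    intro hk
    have hk' : k ≤ s + 1 := by omega
    have e1 : s + 1 - k = (s - k) + 1 := by omega
    have hr : M (s - k + 1) / M (s - k) ≤ M (s + 1) / M s :=
      ratio_mono hM (by omega)
    have h0 : 0 < M (s - k) := hM.1 _
    have h1 : 0 < M (s - k + 1) := hM.1 _
    have h2 : 0 < (M (s + 1) / M s) ^ k := pow_pos (div_pos (hM.1 _) (hM.1 _)) k
    have h3 : M (s - k + 1) ≤ M (s - k) * (M (s + 1) / M s) := by
      rw [← div_le_iff₀' h0] at *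
      exact le_trans hr (le_refl _)
    calc M (s + 1) ≤ M (s + 1 - k) * (M (s + 1) / M s) ^ k := ih hk'
      _ = M (s - k + 1) * (M (s + 1) / M s) ^ k := by rw [e1]
      _ ≤ (M (s - k) * (M (s + 1) / M s)) * (M (s + 1) / M s) ^ k :=
          mul_le_mul_of_nonneg_right h3 h2.le
      _ = M (s + 1 - (k + 1)) * (M (s + 1) / M s) ^ (k + 1) := by
          have : s + 1 - (k + 1) = s - k := by omega
          rw [this]; ring

lemma logM_le_phiStar (hM : IsLC M) (q : ℕ) : Real.log (M q) ≤ phiStar M (q : ℝ) := by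
  cases q with
  | zero => simp [hM.2.1]; exact phiStar_nonneg hM (le_refl 0)
  | succ s =>
    set r := M (s + 1) / M s with hr
    have hrpos : 0 < r := div_pos (hM.1 _) (hM.1 _)
    have hr1 : 1 ≤ r := by
      have h := ratio_mono hM (Nat.zero_le s)
      simp only [hM.2.1, div_one] at h
      have h1 := hM.2.1 ▸ hM.2.2.1
      exact le_trans h1 h
    set x := Real.log r with hx
    have hx0 : 0 ≤ x := Real.log_nonneg hr1
    have claim : omegaM M (Real.exp x) ≤ (s + 1 : ℝ) * x - Real.log (M (s + 1)) := by
      refine phi_le hM x fun p => ?_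
      rcases le_or_gt p (s + 1) with hp | hp
      · have h := ratio_pow_lower hM s (s + 1 - p) (by omega)
        have e1 : s + 1 - (s + 1 - p) = p := by omega
        rw [e1] at h
        have hlog := Real.log_le_log (hM.1 _) h
        rw [Real.log_mul (hM.1 p).ne' (pow_pos hrpos _).ne', Real.log_pow] at hlog
        have e2 : ((s + 1 - p : ℕ) : ℝ) = (s + 1 : ℝ) - p := by
          push_cast [Nat.cast_sub hp]; ring
        rw [e2] at hlog
        push_cast
        nlinarith
      · have h := ratio_pow_upper hM s (p - (s + 1))
        have e1 : s + 1 + (p - (s + 1)) = p := by omega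
        rw [e1] at h
        have hlog := Real.log_le_log (mul_pos (hM.1 _) (pow_pos hrpos _)) h
        rw [Real.log_mul (hM.1 _).ne' (pow_pos hrpos _).ne', Real.log_pow] at hlog
        have e2 : ((p - (s + 1) : ℕ) : ℝ) = (p : ℝ) - (s + 1) := by
          have : s + 1 ≤ p := by omega
          push_cast [Nat.cast_sub this]; ring
        rw [e2] at hlog
        push_cast
        nlinarith
    have h1 := le_phiStar hM (by positivity : (0:ℝ) ≤ ((s+1 : ℕ) : ℝ)) hx0
    have : Real.log (M (s + 1)) ≤ x * ((s + 1 : ℕ) : ℝ) - omegaM M (Real.exp x) := by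
      push_cast
      push_cast at claim
      nlinarith
    linarith


lemma phi_mg (hM : IsLC M) {C₀ : ℝ} (hC₀ : 1 ≤ C₀)
    (hmg : ∀ p q : ℕ, M (p + q) ≤ C₀ ^ (p + q) * M p * M q)
    {x : ℝ} (hx : 0 ≤ x) :
    2 * omegaM M (Real.exp x) ≤ omegaM M (Real.exp (x + Real.log C₀)) := by
  set h := Real.log C₀ with hh
  have hC₀pos : (0:ℝ) < C₀ := lt_of_lt_of_le zero_lt_one hC₀
  have key : ∀ p q : ℕ, ((p : ℝ) * x - Real.log (M p)) + ((q : ℝ) * x - Real.log (M q)) ≤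
      (((p + q : ℕ)) : ℝ) * (x + h) - Real.log (M (p + q)) := by
    intro p q
    have h1 := hmg p q
    have hlog := Real.log_le_log (hM.1 (p + q)) h1
    rw [Real.log_mul (mul_pos (pow_pos hC₀pos _) (hM.1 p)).ne' (hM.1 q).ne',
      Real.log_mul (pow_pos hC₀pos _).ne' (hM.1 p).ne', Real.log_pow] at hlog
    push_cast
    push_cast at hlog
    nlinarith [(by positivity : (0:ℝ) ≤ (p:ℝ) + (q:ℝ))]
  have step1 : ∀ q : ℕ, omegaM M (Real.exp x) + ((q : ℝ) * x - Real.log (M q)) ≤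
      omegaM M (Real.exp (x + h)) := by
    intro q
    have : omegaM M (Real.exp x) ≤ omegaM M (Real.exp (x + h)) - ((q : ℝ) * x - Real.log (M q)) := by
      refine phi_le hM x fun p => ?_
      have h2 := g_le_phi hM (x + h) (p + q)
      have h3 := key p q
      linarith
    linarith
  have step2 : omegaM M (Real.exp x) ≤ omegaM M (Real.exp (x + h)) - omegaM M (Real.exp x) := by
    refine phi_le hM x fun q => ?_
    have := step1 q
    linarith
  linarith

lemma phiStar_double (hM : IsLC M) {C₀ : ℝ} (hC₀ : 1 ≤ C₀)
    (hmg : ∀ p q : ℕ, M (p + q) ≤ C₀ ^ (p + q) * M p * M q)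
    {y : ℝ} (hy : 0 ≤ y) :
    phiStar M (2 * y) ≤ 2 * phiStar M y + 2 * Real.log C₀ * y := by
  set h := Real.log C₀ with hh
  have hh0 : 0 ≤ h := Real.log_nonneg hC₀
  have hΦ := phiStar_nonneg hM hy
  refine phiStar_le' hM _ fun x hx => ?_
  rcases le_or_gt x h with hxh | hxh
  · have h2 := phi_nonneg hM x
    have h3 : x * (2 * y) ≤ h * (2 * y) := mul_le_mul_of_nonneg_right hxh (by linarith)
    nlinarith
  · have hxh' : 0 ≤ x - h := by linarith
    have hmg2 := phi_mg hM hC₀ hmg hxh'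
    rw [sub_add_cancel] at hmg2
    have h1 := le_phiStar hM hy hxh'
    nlinarith

lemma phiStar_pow2 (hM : IsLC M) {C₀ : ℝ} (hC₀ : 1 ≤ C₀)
    (hmg : ∀ p q : ℕ, M (p + q) ≤ C₀ ^ (p + q) * M p * M q)
    (k : ℕ) {y : ℝ} (hy : 0 ≤ y) :
    phiStar M ((2:ℝ) ^ k * y) ≤ (2:ℝ) ^ k * (phiStar M y + k * Real.log C₀ * y) := by
  induction k with
  | zero => simp
  | succ k ih =>
    have h2k : (0:ℝ) < 2 ^ k := by positivity
    have e1 : (2:ℝ) ^ (k + 1) * y = 2 * ((2:ℝ) ^ k * y) := by ring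
    calc phiStar M ((2:ℝ) ^ (k + 1) * y) = phiStar M (2 * ((2:ℝ) ^ k * y)) := by rw [e1]
      _ ≤ 2 * phiStar M ((2:ℝ) ^ k * y) + 2 * Real.log C₀ * ((2:ℝ) ^ k * y) :=
          phiStar_double hM hC₀ hmg (by positivity)
      _ ≤ 2 * ((2:ℝ) ^ k * (phiStar M y + k * Real.log C₀ * y))
            + 2 * Real.log C₀ * ((2:ℝ) ^ k * y) := by linarith
      _ = (2:ℝ) ^ (k + 1) * (phiStar M y + (k + 1 : ℕ) * Real.log C₀ * y) := by
          push_cast; ring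




lemma oneDiv_phiStar_le (hM : IsLC M) {C₀ : ℝ} (hC₀ : 1 ≤ C₀)
    (hmg : ∀ p q : ℕ, M (p + q) ≤ C₀ ^ (p + q) * M p * M q)
    {x : ℝ} (hx : 0 < x) {k : ℕ} (hk : x ≤ 2 ^ k) {p : ℕ} (hp : 1 ≤ p) :
    (1 / x) * phiStar M (x * p) ≤ Real.log (M p) + k * Real.log C₀ * p := by
  have h2k : (0:ℝ) < 2 ^ k := by positivity
  have hp' : (0:ℝ) < p := by exact_mod_cast hp
  have hxp : 0 < x * p := mul_pos hx hp'
  have s := phiStar_scale hM hxp (mul_le_mul_of_nonneg_right hk hp'.le)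
  -- s : (2^k * p) * Φ(x*p) ≤ (x*p) * Φ(2^k*p)
  have key : 2 ^ k * phiStar M (x * p) ≤ x * phiStar M ((2:ℝ) ^ k * p) := by
    have h1 : (p:ℝ) * (2 ^ k * phiStar M (x * p)) ≤ (p:ℝ) * (x * phiStar M ((2:ℝ)^k * p)) := by
      nlinarith [s]
    exact le_of_mul_le_mul_left h1 hp'
  have pow2 := phiStar_pow2 hM hC₀ hmg k (Nat.cast_nonneg p : (0:ℝ) ≤ p)
  have hlog := phiStar_le_logM hM p
  have bound : phiStar M ((2:ℝ) ^ k * p) ≤ 2 ^ k * (Real.log (M p) + k * Real.log C₀ * p) := by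
    have : phiStar M (p:ℝ) + (k:ℝ) * Real.log C₀ * p ≤ Real.log (M p) + k * Real.log C₀ * p := by
      linarith
    calc phiStar M ((2:ℝ) ^ k * p) ≤ (2:ℝ)^k * (phiStar M (p:ℝ) + k * Real.log C₀ * p) := pow2
      _ ≤ (2:ℝ)^k * (Real.log (M p) + k * Real.log C₀ * p) :=
          mul_le_mul_of_nonneg_left this h2k.le
  have final : x * phiStar M ((2:ℝ)^k * p) ≤ x * ((2:ℝ)^k * (Real.log (M p) + k * Real.log C₀ * p)) :=
    mul_le_mul_of_nonneg_left bound hx.le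
  rw [one_div, inv_mul_le_iff₀ hx]
  calc phiStar M (x * p) ≤ (x / 2^k) * phiStar M ((2:ℝ)^k * p) := by
        rw [div_mul_eq_mul_div, le_div_iff₀ h2k]
        nlinarith [key]
    _ ≤ (x / 2^k) * (2^k * (Real.log (M p) + k * Real.log C₀ * p)) := by
        apply mul_le_mul_of_nonneg_left bound (by positivity)
    _ = x * (Real.log (M p) + ↑k * Real.log C₀ * ↑p) := by field_simp

lemma mMat_le (hM : IsLC M) {C₀ : ℝ} (hC₀ : 1 ≤ C₀)
    (hmg : ∀ p q : ℕ, M (p + q) ≤ C₀ ^ (p + q) * M p * M q)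
    {x : ℝ} (hx : 0 < x) {k : ℕ} (hk : x ≤ 2 ^ k) {p : ℕ} (hp : 1 ≤ p) :
    mMat M x p ≤ (Real.exp ((k:ℝ) * Real.log C₀)) ^ p * mseq M p := by
  have h1 := oneDiv_phiStar_le hM hC₀ hmg hx hk hp
  have h2 : MMat M x p ≤ Real.exp (Real.log (M p) + k * Real.log C₀ * p) := by
    rw [MMat]
    exact Real.exp_le_exp.mpr h1
  have h3 : Real.exp (Real.log (M p) + (k:ℝ) * Real.log C₀ * p)
      = M p * (Real.exp ((k:ℝ) * Real.log C₀)) ^ p := by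
    rw [Real.exp_add, Real.exp_log (hM.1 p)]
    congr 1
    rw [← Real.exp_nat_mul]
    ring_nf
  rw [mMat, mseq]
  have hfac : (0:ℝ) < (Nat.factorial p : ℝ) := by exact_mod_cast Nat.factorial_pos p
  rw [div_le_iff₀ hfac]
  calc MMat M x p ≤ M p * (Real.exp ((k:ℝ) * Real.log C₀)) ^ p := h3 ▸ h2
    _ = Real.exp ((k:ℝ) * Real.log C₀) ^ p * (M p / ↑(Nat.factorial p)) * ↑(Nat.factorial p) := by
        field_simp

lemma mseq_le_mMat1 (hM : IsLC M) (q : ℕ) : mseq M q ≤ mMat M 1 q := by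
  rw [mseq, mMat, MMat]
  have hfac : (0:ℝ) < (Nat.factorial q : ℝ) := by exact_mod_cast Nat.factorial_pos q
  have h1 : M q ≤ Real.exp (1 / 1 * phiStar M (1 * (q:ℝ))) := by
    have := logM_le_phiStar hM q
    calc M q = Real.exp (Real.log (M q)) := (Real.exp_log (hM.1 q)).symm
      _ ≤ Real.exp (1 / 1 * phiStar M (1 * (q:ℝ))) := by
          apply Real.exp_le_exp.mpr; simpa using this
  exact div_le_div_of_nonneg_right h1 hfac.le

lemma root_le_scale {a b E : ℝ} (ha : 0 ≤ a) (hb : 0 ≤ b) (hE : 0 ≤ E) {p : ℕ} (hp : 1 ≤ p)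
    (hab : a ≤ E ^ p * b) : a ^ (1 / (p : ℝ)) ≤ E * b ^ (1 / (p : ℝ)) := by
  have hp0 : (p : ℝ) ≠ 0 := by positivity
  calc a ^ (1 / (p:ℝ)) ≤ (E ^ p * b) ^ (1 / (p:ℝ)) :=
        Real.rpow_le_rpow ha hab (by positivity)
    _ = (E ^ p) ^ (1 / (p:ℝ)) * b ^ (1 / (p:ℝ)) := Real.mul_rpow (by positivity) hb
    _ = E * b ^ (1 / (p:ℝ)) := by
        rw [← Real.rpow_natCast E p, ← Real.rpow_mul hE, mul_one_div, div_self hp0,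
          Real.rpow_one]

lemma mseq_pos (hM : IsLC M) (p : ℕ) : 0 < mseq M p := by
  rw [mseq]
  have : (0:ℝ) < (Nat.factorial p : ℝ) := by exact_mod_cast Nat.factorial_pos p
  exact div_pos (hM.1 p) this

lemma mseq_mg (hM : IsLC M) {C₀ : ℝ} (hC₀ : 1 ≤ C₀)
    (hmg : ∀ p q : ℕ, M (p + q) ≤ C₀ ^ (p + q) * M p * M q) (a b : ℕ) :
    mseq M (a + b) ≤ C₀ ^ (a + b) * mseq M a * mseq M b := by
  have hC₀pos : (0:ℝ) < C₀ := lt_of_lt_of_le zero_lt_one hC₀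
  have hfa : (0:ℝ) < (Nat.factorial a : ℝ) := by exact_mod_cast Nat.factorial_pos a
  have hfb : (0:ℝ) < (Nat.factorial b : ℝ) := by exact_mod_cast Nat.factorial_pos b
  have hfab : (0:ℝ) < (Nat.factorial (a + b) : ℝ) := by exact_mod_cast Nat.factorial_pos (a + b)
  have hdvd : (Nat.factorial a * Nat.factorial b : ℕ) ≤ Nat.factorial (a + b) :=
    Nat.le_of_dvd (Nat.factorial_pos _) (Nat.factorial_mul_factorial_dvd_factorial_add a b)
  have hdvd' : (Nat.factorial a : ℝ) * (Nat.factorial b : ℝ) ≤ (Nat.factorial (a + b) : ℝ) := by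
    exact_mod_cast hdvd
  rw [mseq, mseq, mseq]
  have step : M (a + b) / (Nat.factorial (a + b) : ℝ)
      ≤ (C₀ ^ (a + b) * M a * M b) / ((Nat.factorial a : ℝ) * (Nat.factorial b : ℝ)) := by
    apply div_le_div₀ (mul_pos (mul_pos (pow_pos hC₀pos _) (hM.1 a)) (hM.1 b)).le
      (hmg a b) (by positivity) hdvd'
  calc M (a + b) / (Nat.factorial (a + b) : ℝ)
      ≤ (C₀ ^ (a + b) * M a * M b) / ((Nat.factorial a : ℝ) * (Nat.factorial b : ℝ)) := step
    _ = C₀ ^ (a + b) * (M a / ↑(Nat.factorial a)) * (M b / ↑(Nat.factorial b)) := by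
        field_simp

lemma mseq_iter (hM : IsLC M) {C₀ : ℝ} (hC₀ : 1 ≤ C₀)
    (hmg : ∀ p q : ℕ, M (p + q) ≤ C₀ ^ (p + q) * M p * M q) (q : ℕ) :
    ∀ k : ℕ, 1 ≤ k → mseq M (k * q) ≤ C₀ ^ (k ^ 2 * q) * (mseq M q) ^ k := by
  have hC₀pos : (0:ℝ) < C₀ := lt_of_lt_of_le zero_lt_one hC₀
  intro k
  induction k with
  | zero => omega
  | succ k ih =>
    intro _
    rcases Nat.eq_zero_or_pos k with rfl | hk
    · have e : (0 + 1) * q = q := by ring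
      have e2 : (0 + 1) ^ 2 * q = q := by ring
      rw [e, e2, pow_one]
      exact le_mul_of_one_le_left (mseq_pos hM q).le (one_le_pow₀ hC₀)
    · have ihk := ih hk
      have e1 : (k + 1) * q = k * q + q := by ring
      have h1 := mseq_mg hM hC₀ hmg (k * q) q
      have h2 : mseq M ((k+1) * q) ≤ C₀ ^ (k * q + q) * mseq M (k * q) * mseq M q := by
        rw [e1]; exact h1
      have hm := mseq_pos hM q
      have hmk := mseq_pos hM (k * q)
      have h3 : C₀ ^ (k * q + q) * mseq M (k * q) * mseq M q
          ≤ C₀ ^ (k * q + q) * (C₀ ^ (k ^ 2 * q) * (mseq M q) ^ k) * mseq M q := by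
        apply mul_le_mul_of_nonneg_right (mul_le_mul_of_nonneg_left ihk (by positivity)) hm.le
      have e2 : C₀ ^ (k * q + q) * (C₀ ^ (k ^ 2 * q) * (mseq M q) ^ k) * mseq M q
          = C₀ ^ (k * q + q + k ^ 2 * q) * (mseq M q) ^ (k + 1) := by
        rw [pow_add C₀, pow_succ]; ring
      have hexp : k * q + q + k ^ 2 * q ≤ (k + 1) ^ 2 * q := by nlinarith
      have h4 : C₀ ^ (k * q + q + k ^ 2 * q) ≤ C₀ ^ ((k + 1) ^ 2 * q) :=
        pow_le_pow_right₀ hC₀ hexp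
      calc mseq M ((k+1) * q) ≤ C₀ ^ (k * q + q + k ^ 2 * q) * (mseq M q) ^ (k + 1) := by
            rw [← e2]; exact le_trans h2 h3
        _ ≤ C₀ ^ ((k + 1) ^ 2 * q) * (mseq M q) ^ (k + 1) :=
            mul_le_mul_of_nonneg_right h4 (by positivity)

lemma mMat_pos (l : ℝ) (p : ℕ) : 0 < mMat M l p := by
  rw [mMat]
  have : (0:ℝ) < (Nat.factorial p : ℝ) := by exact_mod_cast Nat.factorial_pos p
  exact div_pos (Real.exp_pos _) this


end Aux

/-- Corollary 4.4: under `(mg)` the truncated condition, root almost increasing,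
and `(M_{rai})` are equivalent. -/
theorem stmt13 (M : ℕ → ℝ) (hM : IsLC M) (hmg : HasMG M) :
    List.TFAE [
      ∃ A : ℝ, 1 ≤ A ∧ ∃ C : ℕ, 1 ≤ C ∧ ∀ p q : ℕ, 1 ≤ p → C * p ≤ q →
        (mseq M p) ^ (1 / (p : ℝ)) ≤ A * (mseq M q) ^ (1 / (q : ℝ)),
      ∃ A : ℝ, 1 ≤ A ∧ ∀ p q : ℕ, 1 ≤ p → p ≤ q →
        (mseq M p) ^ (1 / (p : ℝ)) ≤ A * (mseq M q) ^ (1 / (q : ℝ)),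
      MRai M] := by
  obtain ⟨C₀, hC₀, hmgC⟩ := hmg
  have hC₀pos : (0:ℝ) < C₀ := lt_of_lt_of_le zero_lt_one hC₀
  have hh : 0 ≤ Real.log C₀ := Real.log_nonneg hC₀
  tfae_have 1 → 2 := by
    rintro ⟨A, hA, C, hC, h1⟩
    refine ⟨A * C₀ ^ C, ?_, ?_⟩
    · nlinarith [one_le_pow₀ (n := C) hC₀]
    intro p q hp hpq
    have hq1 : 1 ≤ q := hp.trans hpq
    have hq0 : (q:ℝ) ≠ 0 := by positivity
    have hCR : (0:ℝ) < (C:ℝ) := by exact_mod_cast hC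
    have hC0 : (C:ℝ) ≠ 0 := hCR.ne'
    have step1 := h1 p (C * q) hp (Nat.mul_le_mul_left C hpq)
    have iter := mseq_iter hM hC₀ hmgC q C hC
    have root : (mseq M (C * q)) ^ (1/((C*q:ℕ):ℝ)) ≤ C₀ ^ C * (mseq M q) ^ (1/(q:ℝ)) := by
      have h2 : (mseq M (C*q)) ^ ((1:ℝ)/((C*q:ℕ):ℝ))
          ≤ (C₀ ^ (C^2*q) * (mseq M q)^C) ^ ((1:ℝ)/((C*q:ℕ):ℝ)) :=
        Real.rpow_le_rpow (mseq_pos hM _).le iter (by positivity)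
      have e1 : ((C₀:ℝ) ^ (C^2*q)) ^ ((1:ℝ)/((C*q:ℕ):ℝ)) = C₀ ^ (C:ℕ) := by
        rw [← Real.rpow_natCast C₀ (C^2*q), ← Real.rpow_mul hC₀pos.le,
          ← Real.rpow_natCast C₀ C]
        congr 1
        push_cast
        field_simp
      have e2 : ((mseq M q) ^ (C:ℕ)) ^ ((1:ℝ)/((C*q:ℕ):ℝ)) = (mseq M q) ^ ((1:ℝ)/(q:ℝ)) := by
        rw [← Real.rpow_natCast (mseq M q) C, ← Real.rpow_mul (mseq_pos hM q).le]
        congr 1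
        push_cast
        field_simp
      calc (mseq M (C*q)) ^ ((1:ℝ)/((C*q:ℕ):ℝ))
          ≤ (C₀ ^ (C^2*q) * (mseq M q)^C) ^ ((1:ℝ)/((C*q:ℕ):ℝ)) := h2
        _ = C₀ ^ C * (mseq M q) ^ ((1:ℝ)/(q:ℝ)) := by
            rw [Real.mul_rpow (by positivity) (pow_nonneg (mseq_pos hM q).le C), e1, e2]
    calc (mseq M p) ^ (1/(p:ℝ)) ≤ A * (mseq M (C*q)) ^ (1/((C*q:ℕ):ℝ)) := step1
      _ ≤ A * (C₀ ^ C * (mseq M q) ^ (1/(q:ℝ))) :=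
          mul_le_mul_of_nonneg_left root (by linarith)
      _ = A * C₀ ^ C * (mseq M q) ^ (1/(q:ℝ)) := by ring
  tfae_have 2 → 3 := by
    rintro ⟨A, hA, h2⟩
    intro x hx
    obtain ⟨k, hk⟩ := pow_unbounded_of_one_lt x (one_lt_two (α := ℝ))
    refine ⟨Real.exp ((k:ℝ) * Real.log C₀) * A, by positivity, 1, one_pos, ?_⟩
    intro p q hp hpq
    have hq := hp.trans hpq
    have c1 := mMat_le hM hC₀ hmgC hx hk.le hp
    have r1 : (mMat M x p) ^ (1/(p:ℝ))
        ≤ Real.exp ((k:ℝ)*Real.log C₀) * (mseq M p)^(1/(p:ℝ)) :=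
      root_le_scale (mMat_pos x p).le (mseq_pos hM p).le (Real.exp_nonneg _) hp c1
    have r2 := h2 p q hp hpq
    have r3 : (mseq M q)^(1/(q:ℝ)) ≤ (mMat M 1 q)^(1/(q:ℝ)) :=
      Real.rpow_le_rpow (mseq_pos hM q).le (mseq_le_mMat1 hM q) (by positivity)
    calc (mMat M x p) ^ (1/(p:ℝ))
        ≤ Real.exp ((k:ℝ)*Real.log C₀) * (mseq M p)^(1/(p:ℝ)) := r1
      _ ≤ Real.exp ((k:ℝ)*Real.log C₀) * (A * (mseq M q)^(1/(q:ℝ))) :=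
          mul_le_mul_of_nonneg_left r2 (Real.exp_nonneg _)
      _ ≤ Real.exp ((k:ℝ)*Real.log C₀) * (A * (mMat M 1 q)^(1/(q:ℝ))) :=
          mul_le_mul_of_nonneg_left (mul_le_mul_of_nonneg_left r3 (by linarith))
            (Real.exp_nonneg _)
      _ = Real.exp ((k:ℝ)*Real.log C₀) * A * (mMat M 1 q)^(1/(q:ℝ)) := by ring
  tfae_have 3 → 2 := by
    intro h3
    obtain ⟨C, hCpos, y, hy, hI⟩ := h3 1 one_pos
    obtain ⟨k, hk⟩ := pow_unbounded_of_one_lt y (one_lt_two (α := ℝ))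
    refine ⟨max 1 (C * Real.exp ((k:ℝ)*Real.log C₀)), le_max_left _ _, ?_⟩
    intro p q hp hpq
    have hq := hp.trans hpq
    have s1 : (mseq M p)^(1/(p:ℝ)) ≤ (mMat M 1 p)^(1/(p:ℝ)) :=
      Real.rpow_le_rpow (mseq_pos hM p).le (mseq_le_mMat1 hM p) (by positivity)
    have s2 := hI p q hp hpq
    have s3 := mMat_le hM hC₀ hmgC hy hk.le hq
    have s4 : (mMat M y q)^(1/(q:ℝ)) ≤ Real.exp ((k:ℝ)*Real.log C₀) * (mseq M q)^(1/(q:ℝ)) :=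
      root_le_scale (mMat_pos y q).le (mseq_pos hM q).le (Real.exp_nonneg _) hq s3
    calc (mseq M p)^(1/(p:ℝ)) ≤ (mMat M 1 p)^(1/(p:ℝ)) := s1
      _ ≤ C * (mMat M y q)^(1/(q:ℝ)) := s2
      _ ≤ C * (Real.exp ((k:ℝ)*Real.log C₀) * (mseq M q)^(1/(q:ℝ))) :=
          mul_le_mul_of_nonneg_left s4 hCpos.le
      _ = (C * Real.exp ((k:ℝ)*Real.log C₀)) * (mseq M q)^(1/(q:ℝ)) := by ring
      _ ≤ max 1 (C * Real.exp ((k:ℝ)*Real.log C₀)) * (mseq M q)^(1/(q:ℝ)) :=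
          mul_le_mul_of_nonneg_right (le_max_right _ _)
            (Real.rpow_nonneg (mseq_pos hM q).le _)
  tfae_have 2 → 1 := by
    rintro ⟨A, hA, h2⟩
    exact ⟨A, hA, 1, le_refl 1, fun p q hp hq => h2 p q hp (by omega)⟩
  tfae_finish
end

section
/- Let M, N : ℕ → ℝ be weight sequences in the class LC with M ≈ N, and suppose the associated weight function ω_M satisfies (α0), i.e. there exist C, D ≥ 1 with ω_M(λ·t) ≤ C·λ·ω_M(t) + D·λ for all λ ≥ 1 and t ≥ 0. Then: (i) ω_N also satisfies (α0); and (ii) ω_M and ω_N are equivalent weight functions, i.e. ω_M(t) = O(ω_N(t)) and ω_N(t) = O(ω_M(t)) as t → +∞. -/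
open Filter Real Asymptotics

lemma aux_bddAbove_of_eventually {f : ℕ → ℝ} (h : ∃ P, ∀ p ≥ P, f p ≤ 0) :
    BddAbove (Set.range f) := by
  obtain ⟨P, hP⟩ := h
  refine ⟨(Finset.range (P+1)).sup' (by simp) f ⊔ 0, ?_⟩
  rintro _ ⟨p, rfl⟩
  rcases le_or_gt p P with hp | hp
  · exact le_sup_of_le_left (Finset.le_sup' f (Finset.mem_range.mpr (by omega)))
  · exact le_sup_of_le_right (hP p hp.le)

lemma isLC_bdd {M : ℕ → ℝ} (hM : IsLC M) {t : ℝ} (ht : 0 < t) :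
    BddAbove (Set.range fun p : ℕ => Real.log (t ^ p / M p)) := by
  obtain ⟨pos, h0, h1, hlc, htend⟩ := hM
  obtain ⟨P, hP⟩ := Filter.eventually_atTop.mp (htend.eventually_ge_atTop (t + 1))
  apply aux_bddAbove_of_eventually
  refine ⟨max P 1, fun p hp => ?_⟩
  have hp1 : 1 ≤ p := le_trans (le_max_right _ _) hp
  have hpne : (p : ℝ) ≠ 0 := Nat.cast_ne_zero.mpr (by omega)
  have hMpos := pos p
  have hMp : (t+1)^p ≤ M p := by
    have hle := hP p (le_trans (le_max_left _ _) hp)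
    calc (t+1)^p = ((t+1) : ℝ) ^ (p : ℝ) := (Real.rpow_natCast _ p).symm
      _ ≤ (M p ^ (1/(p:ℝ))) ^ (p:ℝ) := Real.rpow_le_rpow (by positivity) hle (by positivity)
      _ = M p := by
          rw [← Real.rpow_mul hMpos.le, one_div, inv_mul_cancel₀ hpne, Real.rpow_one]
  have htp : t^p ≤ (t+1)^p := pow_le_pow_left₀ ht.le (by linarith) p
  have : t^p / M p ≤ 1 := (div_le_one hMpos).mpr (le_trans htp hMp)
  exact Real.log_nonpos (by positivity) this

lemma term_le_omega {M : ℕ → ℝ} (hM : IsLC M) {t : ℝ} (ht : 0 < t) (p : ℕ) :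
    Real.log (t ^ p / M p) ≤ omegaM M t := by
  rw [omegaM, if_neg ht.ne']
  exact le_ciSup (isLC_bdd hM ht) p

lemma omega_nonneg {M : ℕ → ℝ} (hM : IsLC M) {t : ℝ} (ht : 0 ≤ t) :
    0 ≤ omegaM M t := by
  rcases ht.eq_or_lt with rfl | ht
  · simp [omegaM]
  · have := term_le_omega hM ht 0
    simpa [hM.2.1] using this

lemma omega_comp {M N : ℕ → ℝ} (hM : IsLC M) (hN : IsLC N) {A : ℝ} (hA1 : 1 ≤ A)
    (hcomp : ∀ p, 1 ≤ p → M p ≤ A^p * N p) {t : ℝ} (ht : 0 < t) :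
    omegaM N t ≤ omegaM M (A * t) := by
  have hA0 : (0:ℝ) < A := lt_of_lt_of_le one_pos hA1
  have hAt : 0 < A * t := by positivity
  rw [omegaM, if_neg ht.ne']
  apply ciSup_le
  intro p
  rcases Nat.eq_zero_or_pos p with rfl | hp
  · simpa [hN.2.1] using omega_nonneg hM hAt.le
  · have hNp := hN.1 p
    have hMp := hM.1 p
    have h1 : t^p / N p ≤ (A*t)^p / M p := by
      rw [div_le_div_iff₀ hNp hMp]
      calc t^p * M p ≤ t^p * (A^p * N p) :=
            mul_le_mul_of_nonneg_left (hcomp p hp) (by positivity)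
        _ = (A*t)^p * N p := by rw [mul_pow]; ring
    calc Real.log (t^p / N p) ≤ Real.log ((A*t)^p / M p) :=
          Real.log_le_log (by positivity) h1
      _ ≤ omegaM M (A*t) := term_le_omega hM hAt p

lemma precsim_bound {M N : ℕ → ℝ} (hMpos : ∀ p, 0 < M p) (hNpos : ∀ p, 0 < N p)
    (h : Precsim M N) : ∃ A, 1 ≤ A ∧ ∀ p, 1 ≤ p → M p ≤ A^p * N p := by
  obtain ⟨A, hA⟩ := h
  refine ⟨max A 1, le_max_right _ _, fun p hp => ?_⟩
  have hx : 0 < M p / N p := div_pos (hMpos p) (hNpos p)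
  have hpne : (p:ℝ) ≠ 0 := Nat.cast_ne_zero.mpr (by omega)
  have h1 : (M p / N p) ^ (1/(p:ℝ)) ≤ max A 1 := (hA p hp).trans (le_max_left _ _)
  have h2 : M p / N p ≤ (max A 1)^p := by
    calc M p / N p = ((M p / N p) ^ (1/(p:ℝ))) ^ (p:ℝ) := by
          rw [← Real.rpow_mul hx.le, one_div, inv_mul_cancel₀ hpne, Real.rpow_one]
      _ ≤ (max A 1) ^ (p:ℝ) :=
          Real.rpow_le_rpow (Real.rpow_nonneg hx.le _) h1 (Nat.cast_nonneg p)
      _ = (max A 1) ^ p := Real.rpow_natCast _ p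
  rw [div_le_iff₀ (hNpos p)] at h2
  linarith


lemma one_le_mul3 {a b c : ℝ} (ha : 1 ≤ a) (hb : 1 ≤ b) (hc : 1 ≤ c) :
    1 ≤ a * b * c := by
  have hab : 1 ≤ a * b := by nlinarith
  nlinarith

lemma omega_tendsto {M : ℕ → ℝ} (hM : IsLC M) :
    Tendsto (omegaM M) atTop atTop := by
  apply tendsto_atTop_mono' atTop
    (show (fun t => Real.log t - Real.log (M 1)) ≤ᶠ[atTop] omegaM M from ?_)
  · have : Tendsto (fun t => Real.log t + -(Real.log (M 1))) atTop atTop :=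
      tendsto_atTop_add_const_right atTop _ Real.tendsto_log_atTop
    simpa [sub_eq_add_neg] using this
  · filter_upwards [eventually_gt_atTop (0:ℝ)] with t ht
    have := term_le_omega hM ht 1
    simpa [Real.log_div ht.ne' (hM.1 1).ne'] using this

lemma bigO_aux {M N : ℕ → ℝ} (hM : IsLC M) (hN : IsLC N) {K : ℝ} (hK : 1 ≤ K)
    (hle : ∀ t : ℝ, 0 < t → omegaM M t ≤ omegaM N (K * t))
    (hα : Alpha0 (omegaM N)) : omegaM M =O[Filter.atTop] omegaM N := by
  obtain ⟨C, hC1, D, hD1, hCD⟩ := hα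
  rw [isBigO_iff]
  refine ⟨C * K + D * K, ?_⟩
  filter_upwards [eventually_gt_atTop (0:ℝ),
    (omega_tendsto hN).eventually_ge_atTop 1] with t ht h1
  have h2 := hle t ht
  have h3 := hCD K hK t ht.le
  simp only [Real.norm_eq_abs]
  rw [abs_of_nonneg (omega_nonneg hM ht.le), abs_of_nonneg (omega_nonneg hN ht.le)]
  nlinarith [mul_nonneg (mul_nonneg (by linarith : (0:ℝ) ≤ D) (by linarith : (0:ℝ) ≤ K)) (by linarith : (0:ℝ) ≤ omegaM N t - 1)]

/-- Corollary 4.8: `(α0)` is preserved under `≈`, and then `ω_M ∼ ω_N`. -/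
theorem stmt16 (M N : ℕ → ℝ) (hM : IsLC M) (hN : IsLC N) (hMN : Approx M N)
    (h : Alpha0 (omegaM M)) :
    Alpha0 (omegaM N) ∧
    (omegaM M =O[Filter.atTop] omegaM N) ∧
    (omegaM N =O[Filter.atTop] omegaM M) := by
  obtain ⟨A, hA1, hAle⟩ := precsim_bound hM.1 hN.1 hMN.1
  obtain ⟨B, hB1, hBle⟩ := precsim_bound hN.1 hM.1 hMN.2
  obtain ⟨C, hC1, D, hD1, hCD⟩ := h
  have hA0 : (0:ℝ) < A := lt_of_lt_of_le one_pos hA1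
  have hB0 : (0:ℝ) < B := lt_of_lt_of_le one_pos hB1
  have hNM : ∀ t : ℝ, 0 < t → omegaM N t ≤ omegaM M (A * t) :=
    fun t ht => omega_comp hM hN hA1 hAle ht
  have hMNle : ∀ t : ℝ, 0 < t → omegaM M t ≤ omegaM N (B * t) :=
    fun t ht => omega_comp hN hM hB1 hBle ht
  have hαN : Alpha0 (omegaM N) := by
    refine ⟨C * A * B, one_le_mul3 hC1 hA1 hB1, D * A * B, one_le_mul3 hD1 hA1 hB1, ?_⟩
    intro lam hlam t ht
    rcases ht.eq_or_lt with rfl | ht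
    · simp only [mul_zero, omegaM, if_pos rfl]
      positivity
    · have hABlam : (1:ℝ) ≤ A * B * lam := one_le_mul3 hA1 hB1 hlam
      have key1 : omegaM N (lam * t) ≤ omegaM M (A * (lam * t)) := hNM _ (by positivity)
      have heq : A * (lam * t) = (A * B * lam) * (t / B) := by field_simp
      have key2 : omegaM M ((A * B * lam) * (t / B)) ≤
          C * (A * B * lam) * omegaM M (t / B) + D * (A * B * lam) :=
        hCD _ hABlam _ (by positivity)
      have key3 : omegaM M (t / B) ≤ omegaM N (B * (t / B)) := hMNle _ (by positivity)
      have hBt : B * (t / B) = t := by field_simp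
      rw [hBt] at key3
      have hnn : (0:ℝ) ≤ C * (A * B * lam) := by positivity
      calc omegaM N (lam * t) ≤ omegaM M ((A * B * lam) * (t / B)) := heq ▸ key1
        _ ≤ C * (A * B * lam) * omegaM M (t / B) + D * (A * B * lam) := key2
        _ ≤ C * (A * B * lam) * omegaM N t + D * (A * B * lam) :=
            add_le_add_left (mul_le_mul_of_nonneg_left key3 hnn) _
        _ = C * A * B * lam * omegaM N t + D * A * B * lam := by ring
  have hαM : Alpha0 (omegaM M) := ⟨C, hC1, D, hD1, hCD⟩
  exact ⟨hαN, bigO_aux hM hN hB1 hMNle hαN, bigO_aux hN hM hA1 hNM hαM⟩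
end

section
/- Let M, N : ℕ → ℝ be weight sequences in the class LC, with m_p := M_p/p! and n_p := N_p/p!. Then the following are equivalent: (i) there exist A ≥ 1, B ≥ 1 and C ≥ 1 such that for every λ ≥ 1 there exists D ≥ 1 with ω_N(λ·C·t) ≤ B·λ·ω_M(A·t) + D·λ for all t ≥ 0 (a mixed version of condition (α1)); (ii) there exist a positive integer C and B ≥ 1 such that for every positive integer λ there exists D ≥ 1 with λ·(M_p)^{1/p} ≤ B·D^{1/p}·(N_{λ·C·p})^{1/(λ·C·p)} for all p ≥ 1; (iii) there exist a positive integer C and A ≥ 1 such that for every positive integer λ there exists D ≥ 1 with (m_p)^{1/p} ≤ A·D^{1/p}·(n_{λ·C·p})^{1/(λ·C·p)} for all p ≥ 1. -/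
open Filter Real Asymptotics

namespace S17


variable {M : ℕ → ℝ}

lemma mu_succ (M : ℕ → ℝ) (p : ℕ) : mu M (p + 1) = M (p + 1) / M p := by
  simp [mu]

lemma mu_pos (hM : IsLC M) (p : ℕ) : 0 < mu M p := by
  unfold mu; split
  · norm_num
  · exact div_pos (hM.1 _) (hM.1 _)

lemma M_succ_eq (hM : IsLC M) (p : ℕ) : M (p + 1) = mu M (p + 1) * M p := by
  rw [mu_succ, div_mul_cancel₀ _ (hM.1 p).ne']

lemma mu_step (hM : IsLC M) (p : ℕ) (hp : 1 ≤ p) : mu M p ≤ mu M (p + 1) := by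
  obtain ⟨q, rfl⟩ : ∃ q, p = q + 1 := ⟨p - 1, (Nat.succ_pred_eq_of_pos hp).symm⟩
  rw [mu_succ, mu_succ, div_le_div_iff₀ (hM.1 _) (hM.1 _)]
  have h := hM.2.2.2.1 (q + 1) (by omega)
  simp only [Nat.add_sub_cancel] at h
  nlinarith [h]

lemma one_le_mu (hM : IsLC M) : ∀ p, 1 ≤ mu M p := by
  intro p
  induction p with
  | zero => simp [mu]
  | succ n ih =>
    cases n with
    | zero =>
      rw [mu_succ, hM.2.1, div_one]
      have := hM.2.2.1; rw [hM.2.1] at this; exact this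
    | succ m => exact ih.trans (mu_step hM _ (by omega))

lemma mu_mono (hM : IsLC M) {p q : ℕ} (hp : 1 ≤ p) (hpq : p ≤ q) : mu M p ≤ mu M q := by
  induction q, hpq using Nat.le_induction with
  | base => exact le_refl _
  | succ n hn ih => exact ih.trans (mu_step hM n (by omega))

lemma one_le_M (hM : IsLC M) : ∀ p, 1 ≤ M p := by
  intro p
  induction p with
  | zero => simp [hM.2.1]
  | succ n ih =>
    rw [M_succ_eq hM n]
    nlinarith [one_le_mu hM (n + 1)]

lemma M_mono (hM : IsLC M) : Monotone M := by
  apply monotone_nat_of_le_succ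
  intro n
  rw [M_succ_eq hM n]
  nlinarith [one_le_mu hM (n + 1), one_le_M hM n]

lemma key (hM : IsLC M) (p : ℕ) :
    ∀ q : ℕ, (mu M (p + 1)) ^ q * M p ≤ (mu M (p + 1)) ^ p * M q := by
  set u := mu M (p + 1) with hu
  have hu1 : 1 ≤ u := one_le_mu hM (p + 1)
  have hu0 : (0:ℝ) < u := by linarith
  have up : ∀ q, p ≤ q → u ^ q * M p ≤ u ^ p * M q := by
    intro q hq
    induction q, hq using Nat.le_induction with
    | base => exact le_refl _
    | succ n hn ih =>
      have hmu : u ≤ mu M (n + 1) := by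
        rw [hu]; exact mu_mono hM (by omega) (by omega)
      have h1 : u ^ (n + 1) * M p = u * (u ^ n * M p) := by ring
      have h2 : u * (u ^ n * M p) ≤ u * (u ^ p * M n) :=
        mul_le_mul_of_nonneg_left ih hu0.le
      have h3 : u * M n ≤ mu M (n + 1) * M n :=
        mul_le_mul_of_nonneg_right hmu (hM.1 n).le
      have h4 : u ^ p * (u * M n) ≤ u ^ p * M (n + 1) := by
        rw [M_succ_eq hM n]
        exact mul_le_mul_of_nonneg_left h3 (pow_pos hu0 p).le
      calc u ^ (n + 1) * M p = u * (u ^ n * M p) := h1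
        _ ≤ u * (u ^ p * M n) := h2
        _ = u ^ p * (u * M n) := by ring
        _ ≤ u ^ p * M (n + 1) := h4
  have down : ∀ k q, q + k = p → u ^ q * M p ≤ u ^ p * M q := by
    intro k
    induction k with
    | zero => intro q hq; have : q = p := by omega
              subst this; exact le_refl _
    | succ n ih =>
      intro q hq
      have h2 := ih (q + 1) (by omega)
      have hmu : mu M (q + 1) ≤ u := by
        rw [hu]; exact mu_mono hM (by omega) (by omega)
      rw [M_succ_eq hM q] at h2
      have h3 : u ^ p * (mu M (q + 1) * M q) ≤ u ^ p * (u * M q) :=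
        mul_le_mul_of_nonneg_left
          (mul_le_mul_of_nonneg_right hmu (hM.1 q).le) (pow_pos hu0 p).le
      have h4 : u * (u ^ q * M p) ≤ u * (u ^ p * M q) := by
        calc u * (u ^ q * M p) = u ^ (q + 1) * M p := by ring
          _ ≤ u ^ p * (mu M (q + 1) * M q) := h2
          _ ≤ u ^ p * (u * M q) := h3
          _ = u * (u ^ p * M q) := by ring
      exact le_of_mul_le_mul_left h4 hu0
  intro q
  rcases le_or_gt p q with h | h
  · exact up q h
  · exact down (p - q) q (by omega)

lemma M_le_u_pow (hM : IsLC M) (p : ℕ) : M p ≤ (mu M (p + 1)) ^ p := by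
  have h := key hM p 0
  simpa [hM.2.1] using h

lemma bdd (hM : IsLC M) {t : ℝ} (ht : 0 < t) :
    BddAbove (Set.range fun p : ℕ => Real.log (t ^ p / M p)) := by
  classical
  obtain ⟨P, hP⟩ := Filter.eventually_atTop.mp (hM.2.2.2.2.eventually_ge_atTop (t + 1))
  set F := Finset.range (P + 1) with hF
  have hFne : F.Nonempty := ⟨0, by simp [hF]⟩
  refine ⟨max 0 (F.sup' hFne fun p => Real.log (t ^ p / M p)), ?_⟩
  rintro x ⟨p, rfl⟩
  rcases le_or_gt p P with hpP | hpP
  · exact le_max_of_le_right (Finset.le_sup' (fun p => Real.log (t ^ p / M p)) (Finset.mem_range.mpr (Nat.lt_succ_of_le hpP)))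
  · refine le_max_of_le_left ?_
    apply Real.log_nonpos (le_of_lt (div_pos (pow_pos ht p) (hM.1 p)))
    rw [div_le_one (hM.1 p)]
    have h1 : t + 1 ≤ (M p) ^ (1 / (p : ℝ)) := hP p (by omega)
    have hp0 : (p : ℝ) ≠ 0 := by
      simp only [ne_eq, Nat.cast_eq_zero]; omega
    have h2 : (t + 1) ^ p ≤ ((M p) ^ (1 / (p : ℝ))) ^ p :=
      pow_le_pow_left₀ (by linarith) h1 p
    rw [← Real.rpow_natCast ((M p) ^ (1 / (p : ℝ))) p, ← Real.rpow_mul (hM.1 p).le,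
      one_div_mul_cancel hp0, Real.rpow_one] at h2
    calc t ^ p ≤ (t + 1) ^ p := pow_le_pow_left₀ ht.le (by linarith) p
      _ ≤ M p := h2

lemma le_omega (hM : IsLC M) {t : ℝ} (ht : 0 < t) (p : ℕ) :
    (p : ℝ) * Real.log t - Real.log (M p) ≤ omegaM M t := by
  rw [omegaM, if_neg ht.ne']
  have h := le_ciSup (bdd hM ht) p
  rwa [Real.log_div (pow_pos ht p).ne' (hM.1 p).ne', Real.log_pow] at h

lemma omega_zero (M : ℕ → ℝ) : omegaM M 0 = 0 := by simp [omegaM]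

lemma omega_nonneg (hM : IsLC M) {t : ℝ} (ht : 0 ≤ t) : 0 ≤ omegaM M t := by
  rcases eq_or_lt_of_le ht with h | h
  · rw [← h, omega_zero]
  · have := le_omega hM h 0
    simpa [hM.2.1] using this

lemma omega_at_mu (hM : IsLC M) (p : ℕ) :
    omegaM M (mu M (p + 1)) ≤ (p : ℝ) * Real.log (mu M (p + 1)) - Real.log (M p) := by
  set u := mu M (p + 1) with hu
  have hu1 : 1 ≤ u := one_le_mu hM (p + 1)
  have hu0 : (0:ℝ) < u := by linarith
  rw [omegaM, if_neg hu0.ne']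
  apply ciSup_le
  intro q
  have h := key hM p q
  have h2 : u ^ q / M q ≤ u ^ p / M p := by
    rw [div_le_div_iff₀ (hM.1 q) (hM.1 p)]
    exact h
  calc Real.log (u ^ q / M q) ≤ Real.log (u ^ p / M p) :=
        Real.log_le_log (div_pos (pow_pos hu0 q) (hM.1 q)) h2
    _ = (p : ℝ) * Real.log u - Real.log (M p) := by
        rw [Real.log_div (pow_pos hu0 p).ne' (hM.1 p).ne', Real.log_pow]




lemma fact_log_le (p : ℕ) : Real.log (p.factorial : ℝ) ≤ (p : ℝ) * Real.log p := by
  have h : ((p.factorial : ℕ) : ℝ) ≤ (p : ℝ) ^ p := by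
    rw [show ((p:ℝ)^p) = ((p ^ p : ℕ) : ℝ) by push_cast; ring]
    exact_mod_cast Nat.factorial_le_pow p
  calc Real.log (p.factorial : ℝ) ≤ Real.log ((p:ℝ) ^ p) :=
        Real.log_le_log (by exact_mod_cast p.factorial_pos) h
    _ = (p : ℝ) * Real.log p := Real.log_pow p p

lemma log_fact_ge (p : ℕ) : (p : ℝ) * Real.log p - p ≤ Real.log (p.factorial : ℝ) := by
  have hf : (0:ℝ) < (p.factorial : ℝ) := by exact_mod_cast p.factorial_pos
  have h := Real.pow_div_factorial_le_exp (x := (p:ℝ)) (by positivity) p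
  have h2 : (p:ℝ) ^ p ≤ (p.factorial : ℝ) * Real.exp p := by
    rw [div_le_iff₀ hf] at h; linarith [h]
  rcases Nat.eq_zero_or_pos p with rfl | hp
  · simp
  have hp0 : (0:ℝ) < (p:ℝ) := by exact_mod_cast hp
  have h3 : Real.log ((p:ℝ) ^ p) ≤ Real.log ((p.factorial : ℝ) * Real.exp p) :=
    Real.log_le_log (pow_pos hp0 p) h2
  rwa [Real.log_pow, Real.log_mul hf.ne' (Real.exp_pos _).ne', Real.log_exp,
    ← sub_le_iff_le_add] at h3

lemma log_prod3 {B D E : ℝ} (hB : 0 < B) (hD : 0 < D) (hE : 0 < E) (a b : ℝ) :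
    Real.log (B * D ^ a * E ^ b) =
      Real.log B + a * Real.log D + b * Real.log E := by
  rw [Real.log_mul (mul_pos hB (Real.rpow_pos_of_pos hD a)).ne'
      (Real.rpow_pos_of_pos hE b).ne',
    Real.log_mul hB.ne' (Real.rpow_pos_of_pos hD a).ne',
    Real.log_rpow hD, Real.log_rpow hE]

lemma imp23 {M N : ℕ → ℝ} (hM : IsLC M) (hN : IsLC N)
    (h : ∃ C : ℕ, 1 ≤ C ∧ ∃ B : ℝ, 1 ≤ B ∧ ∀ lam : ℕ, 1 ≤ lam → ∃ D : ℝ, 1 ≤ D ∧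
      ∀ p : ℕ, 1 ≤ p → (lam : ℝ) * (M p) ^ (1 / (p : ℝ)) ≤
        B * D ^ (1 / (p : ℝ)) * (N (lam * C * p)) ^ (1 / ((lam : ℝ) * C * p))) :
    ∃ C : ℕ, 1 ≤ C ∧ ∃ A : ℝ, 1 ≤ A ∧ ∀ lam : ℕ, 1 ≤ lam → ∃ D : ℝ, 1 ≤ D ∧
      ∀ p : ℕ, 1 ≤ p → (mseq M p) ^ (1 / (p : ℝ)) ≤
        A * D ^ (1 / (p : ℝ)) * (mseq N (lam * C * p)) ^ (1 / ((lam : ℝ) * C * p)) := by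
  obtain ⟨C, hC, B, hB, h⟩ := h
  have hC0 : (0:ℝ) < (C:ℝ) := by exact_mod_cast hC
  have hexp1 : (1:ℝ) ≤ Real.exp 1 := by
    have := Real.add_one_le_exp (1:ℝ); linarith
  have hC1 : (1:ℝ) ≤ (C:ℝ) := by exact_mod_cast hC
  refine ⟨C, hC, B * C * Real.exp 1, by
    have hBC : (1:ℝ) ≤ B * C := by nlinarith
    nlinarith [hBC, hexp1], fun lam hlam => ?_⟩
  obtain ⟨D, hD, h2⟩ := h lam hlam
  refine ⟨D, hD, fun p hp => ?_⟩
  have hlam0 : (0:ℝ) < (lam:ℝ) := by exact_mod_cast hlam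
  have hP : (0:ℝ) < (p:ℝ) := by exact_mod_cast hp
  set q : ℕ := lam * C * p with hq
  have hq1 : 1 ≤ q := by
    have := Nat.mul_pos (Nat.mul_pos hlam hC) hp; omega
  set Q : ℝ := (lam : ℝ) * C * p with hQ
  have hQ0 : 0 < Q := by positivity
  have hQcast : ((q : ℕ) : ℝ) = Q := by rw [hq, hQ]; push_cast; ring
  have hfp : (0:ℝ) < (p.factorial : ℝ) := by exact_mod_cast p.factorial_pos
  have hfq : (0:ℝ) < (q.factorial : ℝ) := by exact_mod_cast q.factorial_pos
  have hmp : 0 < mseq M p := div_pos (hM.1 p) hfp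
  have hnq : 0 < mseq N q := div_pos (hN.1 q) hfq
  have hB0 : (0:ℝ) < B := by linarith
  have hD0 : (0:ℝ) < D := by linarith
  have hA0 : (0:ℝ) < B * C * Real.exp 1 := by positivity
  -- base inequality in log form
  have base := Real.log_le_log (mul_pos hlam0 (Real.rpow_pos_of_pos (hM.1 p) _)) (h2 p hp)
  rw [log_prod3 hB0 hD0 (hN.1 q), Real.log_mul hlam0.ne'
      (Real.rpow_pos_of_pos (hM.1 p) _).ne', Real.log_rpow (hM.1 p)] at base
  -- goal in log form
  apply (Real.log_le_log_iff (Real.rpow_pos_of_pos hmp _)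
    (mul_pos (mul_pos hA0 (Real.rpow_pos_of_pos hD0 _)) (Real.rpow_pos_of_pos hnq _))).mp
  rw [log_prod3 hA0 hD0 hnq, Real.log_rpow hmp]
  have em : Real.log (mseq M p) = Real.log (M p) - Real.log (p.factorial : ℝ) := by
    rw [show mseq M p = M p / (p.factorial:ℝ) from rfl, Real.log_div (hM.1 p).ne' hfp.ne']
  have en : Real.log (mseq N q) = Real.log (N q) - Real.log (q.factorial : ℝ) := by
    rw [show mseq N q = N q / (q.factorial:ℝ) from rfl, Real.log_div (hN.1 q).ne' hfq.ne']
  have eA : Real.log (B * C * Real.exp 1) = Real.log B + Real.log C + 1 := by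
    rw [Real.log_mul (mul_pos hB0 hC0).ne' (Real.exp_pos 1).ne',
      Real.log_mul hB0.ne' hC0.ne', Real.log_exp]
  rw [em, en, eA]
  -- factorial estimates
  have g1 : (1 / Q) * Real.log (q.factorial : ℝ) ≤ Real.log Q := by
    have hq2 := fact_log_le q
    rw [hQcast] at hq2
    calc (1 / Q) * Real.log (q.factorial : ℝ) ≤ (1 / Q) * (Q * Real.log Q) :=
          mul_le_mul_of_nonneg_left hq2 (by positivity)
      _ = Real.log Q := by field_simp
  have g2 : Real.log (p:ℝ) - 1 ≤ (1 / (p:ℝ)) * Real.log (p.factorial : ℝ) := by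
    have h3 := log_fact_ge p
    have h4 : (1/(p:ℝ)) * ((p:ℝ) * Real.log p - (p:ℝ)) ≤
        (1/(p:ℝ)) * Real.log (p.factorial : ℝ) :=
      mul_le_mul_of_nonneg_left h3 (by positivity)
    calc Real.log (p:ℝ) - 1 = (1/(p:ℝ)) * ((p:ℝ) * Real.log p - (p:ℝ)) := by
          field_simp
      _ ≤ _ := h4
  have g3 : Real.log Q = Real.log (lam:ℝ) + Real.log (C:ℝ) + Real.log (p:ℝ) := by
    rw [hQ, Real.log_mul (mul_pos hlam0 hC0).ne' hP.ne', Real.log_mul hlam0.ne' hC0.ne']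
  have hloglam : 0 ≤ Real.log (lam:ℝ) := Real.log_nonneg (by exact_mod_cast hlam)
  linarith [base, g1, g2, g3, hloglam]

lemma imp32 {M N : ℕ → ℝ} (hM : IsLC M) (hN : IsLC N)
    (h : ∃ C : ℕ, 1 ≤ C ∧ ∃ A : ℝ, 1 ≤ A ∧ ∀ lam : ℕ, 1 ≤ lam → ∃ D : ℝ, 1 ≤ D ∧
      ∀ p : ℕ, 1 ≤ p → (mseq M p) ^ (1 / (p : ℝ)) ≤
        A * D ^ (1 / (p : ℝ)) * (mseq N (lam * C * p)) ^ (1 / ((lam : ℝ) * C * p))) :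
    ∃ C : ℕ, 1 ≤ C ∧ ∃ B : ℝ, 1 ≤ B ∧ ∀ lam : ℕ, 1 ≤ lam → ∃ D : ℝ, 1 ≤ D ∧
      ∀ p : ℕ, 1 ≤ p → (lam : ℝ) * (M p) ^ (1 / (p : ℝ)) ≤
        B * D ^ (1 / (p : ℝ)) * (N (lam * C * p)) ^ (1 / ((lam : ℝ) * C * p)) := by
  obtain ⟨C, hC, A, hA, h⟩ := h
  have hC0 : (0:ℝ) < (C:ℝ) := by exact_mod_cast hC
  refine ⟨3 * C, by omega, A, hA, fun lam hlam => ?_⟩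
  obtain ⟨D, hD, h3⟩ := h (3 * lam) (by omega)
  refine ⟨D, hD, fun p hp => ?_⟩
  have h4 := h3 p hp
  have hlam0 : (0:ℝ) < (lam:ℝ) := by exact_mod_cast hlam
  have hP : (0:ℝ) < (p:ℝ) := by exact_mod_cast hp
  have hidx : 3 * lam * C * p = lam * (3 * C) * p := by ring
  have hexp : ((3 * lam : ℕ) : ℝ) * (C:ℝ) * (p:ℝ) =
      (lam : ℝ) * ((3 * C : ℕ):ℝ) * (p:ℝ) := by push_cast; ring
  rw [hidx, hexp] at h4
  set q : ℕ := lam * (3 * C) * p with hq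
  have hq1 : 1 ≤ q := by
    have := Nat.mul_pos (Nat.mul_pos hlam (by omega : 0 < 3 * C)) hp; omega
  set Q : ℝ := (lam : ℝ) * ((3 * C : ℕ):ℝ) * (p:ℝ) with hQ
  have h3C0 : (0:ℝ) < ((3 * C : ℕ):ℝ) := by exact_mod_cast (by omega : 0 < 3 * C)
  have hQ0 : 0 < Q := by rw [hQ]; positivity
  have hQcast : ((q : ℕ) : ℝ) = Q := by rw [hq, hQ]; push_cast; ring
  have hfp : (0:ℝ) < (p.factorial : ℝ) := by exact_mod_cast p.factorial_pos
  have hfq : (0:ℝ) < (q.factorial : ℝ) := by exact_mod_cast q.factorial_pos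
  have hmp : 0 < mseq M p := div_pos (hM.1 p) hfp
  have hnq : 0 < mseq N q := div_pos (hN.1 q) hfq
  have hA0 : (0:ℝ) < A := by linarith
  have hD0 : (0:ℝ) < D := by linarith
  have em : Real.log (mseq M p) = Real.log (M p) - Real.log (p.factorial : ℝ) := by
    rw [show mseq M p = M p / (p.factorial:ℝ) from rfl, Real.log_div (hM.1 p).ne' hfp.ne']
  have en : Real.log (mseq N q) = Real.log (N q) - Real.log (q.factorial : ℝ) := by
    rw [show mseq N q = N q / (q.factorial:ℝ) from rfl, Real.log_div (hN.1 q).ne' hfq.ne']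
  have base := Real.log_le_log (Real.rpow_pos_of_pos hmp _) h4
  rw [log_prod3 hA0 hD0 hnq, Real.log_rpow hmp, em, en] at base
  apply (Real.log_le_log_iff (mul_pos hlam0 (Real.rpow_pos_of_pos (hM.1 p) _))
    (mul_pos (mul_pos hA0 (Real.rpow_pos_of_pos hD0 _))
      (Real.rpow_pos_of_pos (hN.1 q) _))).mp
  rw [log_prod3 hA0 hD0 (hN.1 q), Real.log_mul hlam0.ne'
      (Real.rpow_pos_of_pos (hM.1 p) _).ne', Real.log_rpow (hM.1 p)]
  have gq : Real.log Q - 1 ≤ (1 / Q) * Real.log (q.factorial : ℝ) := by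
    have h5 := log_fact_ge q
    rw [hQcast] at h5
    have h6 : (1/Q) * (Q * Real.log Q - Q) ≤ (1/Q) * Real.log (q.factorial : ℝ) :=
      mul_le_mul_of_nonneg_left h5 (by positivity)
    calc Real.log Q - 1 = (1/Q) * (Q * Real.log Q - Q) := by field_simp
      _ ≤ _ := h6
  have gp : (1 / (p:ℝ)) * Real.log (p.factorial : ℝ) ≤ Real.log (p:ℝ) := by
    have h5 := fact_log_le p
    calc (1/(p:ℝ)) * Real.log (p.factorial : ℝ) ≤ (1/(p:ℝ)) * ((p:ℝ) * Real.log p) :=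
          mul_le_mul_of_nonneg_left h5 (by positivity)
      _ = Real.log (p:ℝ) := by field_simp
  have glogQ : Real.log Q = Real.log (lam:ℝ) + Real.log ((3*C:ℕ):ℝ) + Real.log (p:ℝ) := by
    rw [hQ, Real.log_mul (mul_pos hlam0 h3C0).ne' hP.ne', Real.log_mul hlam0.ne' h3C0.ne']
  have g3C : Real.log ((3*C:ℕ):ℝ) = Real.log 3 + Real.log (C:ℝ) := by
    rw [show ((3*C:ℕ):ℝ) = 3 * (C:ℝ) by push_cast; ring,
      Real.log_mul (by norm_num) hC0.ne']
  have glog3 : (1:ℝ) ≤ Real.log 3 := by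
    rw [show (1:ℝ) = Real.log (Real.exp 1) by rw [Real.log_exp]]
    exact Real.log_le_log (Real.exp_pos 1) (by nlinarith [Real.exp_one_lt_d9])
  have hlogC : 0 ≤ Real.log (C:ℝ) := Real.log_nonneg (by exact_mod_cast hC)
  linarith [base, gq, gp, glogQ, g3C, glog3, hlogC]

set_option maxHeartbeats 1000000 in
lemma imp12 {M N : ℕ → ℝ} (hM : IsLC M) (hN : IsLC N)
    (h : ∃ A : ℝ, 1 ≤ A ∧ ∃ B : ℝ, 1 ≤ B ∧ ∃ C : ℝ, 1 ≤ C ∧ ∀ lam : ℝ, 1 ≤ lam →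
      ∃ D : ℝ, 1 ≤ D ∧ ∀ t : ℝ, 0 ≤ t →
        omegaM N (lam * C * t) ≤ B * lam * omegaM M (A * t) + D * lam) :
    ∃ C : ℕ, 1 ≤ C ∧ ∃ B : ℝ, 1 ≤ B ∧ ∀ lam : ℕ, 1 ≤ lam → ∃ D : ℝ, 1 ≤ D ∧
      ∀ p : ℕ, 1 ≤ p → (lam : ℝ) * (M p) ^ (1 / (p : ℝ)) ≤
        B * D ^ (1 / (p : ℝ)) * (N (lam * C * p)) ^ (1 / ((lam : ℝ) * C * p)) := by
  obtain ⟨A, hA, B, hB, C, hC, h⟩ := h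
  have hA0 : (0:ℝ) < A := by linarith
  have hB0 : (0:ℝ) < B := by linarith
  have hC0 : (0:ℝ) < C := by linarith
  refine ⟨⌈B⌉₊, Nat.ceil_pos.mpr hB0, A, hA, fun lam hlam => ?_⟩
  have hlamr : (1:ℝ) ≤ (lam:ℝ) := by exact_mod_cast hlam
  have hlam0 : (0:ℝ) < (lam:ℝ) := by linarith
  obtain ⟨D, hD, hw⟩ := h (lam:ℝ) hlamr
  refine ⟨Real.exp D, by linarith [Real.add_one_le_exp D], fun p hp => ?_⟩
  have hP0 : (0:ℝ) < (p:ℝ) := by exact_mod_cast hp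
  have hC2 : B ≤ (⌈B⌉₊:ℝ) := Nat.le_ceil B
  have hC21 : (1:ℝ) ≤ (⌈B⌉₊:ℝ) := by linarith
  have hu1 : 1 ≤ mu M (p+1) := one_le_mu hM (p+1)
  have hu0 : (0:ℝ) < mu M (p+1) := by linarith
  have hwm := omega_at_mu hM p
  have hw2 := hw (mu M (p+1) / A) (by positivity)
  rw [show A * (mu M (p+1) / A) = mu M (p+1) by field_simp] at hw2
  have hs0 : (0:ℝ) < (lam:ℝ) * C * (mu M (p+1) / A) := by positivity
  set q : ℕ := lam * ⌈B⌉₊ * p with hqdef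
  have hqcast : ((q:ℕ):ℝ) = (lam:ℝ) * (⌈B⌉₊:ℝ) * (p:ℝ) := by rw [hqdef]; push_cast; ring
  have hwn := le_omega hN hs0 q
  rw [hqcast] at hwn
  have f1 : ((lam:ℝ)*(⌈B⌉₊:ℝ)*(p:ℝ)) * Real.log ((lam:ℝ) * C * (mu M (p+1) / A))
      - Real.log (N q) ≤
      B * (lam:ℝ) * ((p:ℝ) * Real.log (mu M (p+1)) - Real.log (M p)) + D * (lam:ℝ) := by
    have h5 : B * (lam:ℝ) * omegaM M (mu M (p+1)) ≤
        B * (lam:ℝ) * ((p:ℝ) * Real.log (mu M (p+1)) - Real.log (M p)) :=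
      mul_le_mul_of_nonneg_left hwm (by positivity)
    linarith [hwn, hw2, h5]
  have f4 : Real.log ((lam:ℝ) * C * (mu M (p+1) / A)) =
      Real.log (lam:ℝ) + Real.log C + Real.log (mu M (p+1)) - Real.log A := by
    rw [Real.log_mul (by positivity) (by positivity), Real.log_mul hlam0.ne' hC0.ne',
      Real.log_div hu0.ne' hA0.ne']
    ring
  rw [f4] at f1
  have f2 : Real.log (M p) ≤ (p:ℝ) * Real.log (mu M (p+1)) := by
    have h6 := Real.log_le_log (hM.1 p) (M_le_u_pow hM p)
    rwa [Real.log_pow] at h6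
  have f3 : 0 ≤ Real.log (M p) := Real.log_nonneg (one_le_M hM p)
  have hlogC : 0 ≤ Real.log C := Real.log_nonneg hC
  apply (Real.log_le_log_iff (mul_pos hlam0 (Real.rpow_pos_of_pos (hM.1 p) _))
    (mul_pos (mul_pos hA0 (Real.rpow_pos_of_pos (Real.exp_pos D) _))
      (Real.rpow_pos_of_pos (hN.1 q) _))).mp
  rw [log_prod3 hA0 (Real.exp_pos D) (hN.1 q), Real.log_mul hlam0.ne'
      (Real.rpow_pos_of_pos (hM.1 p) _).ne', Real.log_rpow (hM.1 p), Real.log_exp]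
  have pf1 := mul_le_mul_of_nonneg_left f1 hP0.le
  have hp1 : (0:ℝ) ≤ ((lam:ℝ)*(⌈B⌉₊:ℝ)*(p:ℝ) - B*(lam:ℝ)*(p:ℝ)) *
      ((p:ℝ) * Real.log (mu M (p+1)) - Real.log (M p)) := by
    apply mul_nonneg
    · nlinarith [mul_nonneg (mul_nonneg hlam0.le hP0.le) (sub_nonneg.mpr hC2)]
    · linarith
  have hp2 : (0:ℝ) ≤ D * ((lam:ℝ)*(⌈B⌉₊:ℝ)*(p:ℝ) - (lam:ℝ)*(p:ℝ)) := by
    apply mul_nonneg (by linarith)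
    nlinarith [mul_nonneg (mul_nonneg hlam0.le hP0.le) (sub_nonneg.mpr hC21)]
  have hp3 : (0:ℝ) ≤ (p:ℝ) * ((lam:ℝ)*(⌈B⌉₊:ℝ)*(p:ℝ)) * Real.log C :=
    mul_nonneg (by positivity) hlogC
  have key : (p:ℝ)*((lam:ℝ)*(⌈B⌉₊:ℝ)*(p:ℝ))*Real.log (lam:ℝ) +
      ((lam:ℝ)*(⌈B⌉₊:ℝ)*(p:ℝ))*Real.log (M p) ≤
      (p:ℝ)*((lam:ℝ)*(⌈B⌉₊:ℝ)*(p:ℝ))*Real.log A +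
      ((lam:ℝ)*(⌈B⌉₊:ℝ)*(p:ℝ))*D + (p:ℝ)*Real.log (N q) := by
    linarith [pf1, hp1, hp2, hp3]
  have hinv : (0:ℝ) ≤ 1/((p:ℝ)*((lam:ℝ)*(⌈B⌉₊:ℝ)*(p:ℝ))) := by positivity
  have h9 := mul_nonneg hinv (sub_nonneg.mpr key)
  have hgoal : Real.log A + 1/(p:ℝ) * D + 1/((lam:ℝ)*(⌈B⌉₊:ℝ)*(p:ℝ)) * Real.log (N q)
      - (Real.log (lam:ℝ) + 1/(p:ℝ) * Real.log (M p)) =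
      1/((p:ℝ)*((lam:ℝ)*(⌈B⌉₊:ℝ)*(p:ℝ))) *
        (((p:ℝ)*((lam:ℝ)*(⌈B⌉₊:ℝ)*(p:ℝ))*Real.log A +
          ((lam:ℝ)*(⌈B⌉₊:ℝ)*(p:ℝ))*D + (p:ℝ)*Real.log (N q)) -
         ((p:ℝ)*((lam:ℝ)*(⌈B⌉₊:ℝ)*(p:ℝ))*Real.log (lam:ℝ) +
          ((lam:ℝ)*(⌈B⌉₊:ℝ)*(p:ℝ))*Real.log (M p))) := by
    field_simp
  linarith [hgoal, h9]

set_option maxHeartbeats 1000000 in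
lemma imp21 {M N : ℕ → ℝ} (hM : IsLC M) (hN : IsLC N)
    (h : ∃ C : ℕ, 1 ≤ C ∧ ∃ B : ℝ, 1 ≤ B ∧ ∀ lam : ℕ, 1 ≤ lam → ∃ D : ℝ, 1 ≤ D ∧
      ∀ p : ℕ, 1 ≤ p → (lam : ℝ) * (M p) ^ (1 / (p : ℝ)) ≤
        B * D ^ (1 / (p : ℝ)) * (N (lam * C * p)) ^ (1 / ((lam : ℝ) * C * p))) :
    ∃ A : ℝ, 1 ≤ A ∧ ∃ B : ℝ, 1 ≤ B ∧ ∃ C : ℝ, 1 ≤ C ∧ ∀ lam : ℝ, 1 ≤ lam →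
      ∃ D : ℝ, 1 ≤ D ∧ ∀ t : ℝ, 0 ≤ t →
        omegaM N (lam * C * t) ≤ B * lam * omegaM M (A * t) + D * lam := by
  obtain ⟨C, hC, B, hB, h⟩ := h
  have hCr1 : (1:ℝ) ≤ (C:ℝ) := by exact_mod_cast hC
  have hCr0 : (0:ℝ) < (C:ℝ) := by linarith
  have hB0 : (0:ℝ) < B := by linarith
  refine ⟨B, hB, 4 * (C:ℝ), by linarith, 1, le_refl 1, fun lam hlam => ?_⟩
  have hlam0 : (0:ℝ) < lam := by linarith
  set k : ℕ := ⌈lam⌉₊ with hkdef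
  have hk1 : 1 ≤ k := Nat.ceil_pos.mpr hlam0
  have hkr : lam ≤ (k:ℝ) := Nat.le_ceil lam
  have hk0r : (0:ℝ) < (k:ℝ) := by linarith
  have hk2 : (k:ℝ) ≤ 2 * lam := by
    have := Nat.ceil_lt_add_one (le_of_lt hlam0)
    linarith
  obtain ⟨D, hD, h2⟩ := h k hk1
  have hD0 : (0:ℝ) < D := by linarith
  have hM1 : (1:ℝ) ≤ M 1 := one_le_M hM 1
  have hlogM1 : 0 ≤ Real.log (M 1) := Real.log_nonneg hM1
  have hlogD : 0 ≤ Real.log D := Real.log_nonneg hD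
  have hD1big : (1:ℝ) ≤ 2*(C:ℝ)*(lam + Real.log (M 1) + Real.log D) + 1 := by
    nlinarith [mul_nonneg (by positivity : (0:ℝ) ≤ 2*(C:ℝ))
      (by linarith : (0:ℝ) ≤ lam + Real.log (M 1) + Real.log D)]
  refine ⟨2*(C:ℝ)*(lam + Real.log (M 1) + Real.log D) + 1, hD1big, fun t ht => ?_⟩
  have hRHS0 : 0 ≤ 4*(C:ℝ)*lam*omegaM M (B*t) + (2*(C:ℝ)*(lam + Real.log (M 1) + Real.log D) + 1)*lam := by
    have hW0 : 0 ≤ omegaM M (B*t) := omega_nonneg hM (by positivity)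
    nlinarith [mul_nonneg (mul_nonneg (by positivity : (0:ℝ) ≤ 4*(C:ℝ)) hlam0.le) hW0,
      mul_nonneg (by linarith : (0:ℝ) ≤ 2*(C:ℝ)*(lam + Real.log (M 1) + Real.log D) + 1) hlam0.le]
  rcases eq_or_lt_of_le ht with rfl | ht0
  · rw [show lam * 1 * (0:ℝ) = 0 by ring, omega_zero]
    exact hRHS0
  · have hs0 : (0:ℝ) < lam * 1 * t := by nlinarith
    have hBt : (0:ℝ) < B * t := by positivity
    set W := omegaM M (B * t) with hWdef
    have hW0 : 0 ≤ W := omega_nonneg hM hBt.le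
    have hW1 : Real.log (B * t) - Real.log (M 1) ≤ W := by
      have h3 := le_omega hM hBt 1
      rw [Nat.cast_one, one_mul] at h3
      exact h3
    have hlogs : Real.log (lam * 1 * t) = Real.log lam + Real.log t := by
      rw [mul_one, Real.log_mul hlam0.ne' ht0.ne']
    have hloglam : Real.log lam ≤ lam := by
      linarith [Real.log_le_sub_one_of_pos hlam0]
    have hlogt : Real.log t ≤ W + Real.log (M 1) := by
      have h4 : Real.log t ≤ Real.log (B * t) := Real.log_le_log ht0 (by nlinarith)
      linarith
    have hS : Real.log (lam * 1 * t) ≤ lam + W + Real.log (M 1) := by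
      rw [hlogs]; linarith
    rw [omegaM, if_neg hs0.ne']
    apply ciSup_le
    intro j
    rw [Real.log_div (pow_pos hs0 j).ne' (hN.1 j).ne', Real.log_pow]
    have hNj : 0 ≤ Real.log (N j) := Real.log_nonneg (one_le_M hN j)
    rcases le_or_gt (Real.log (lam * 1 * t)) 0 with hls | hls
    · have h5 : (j:ℝ) * Real.log (lam * 1 * t) ≤ 0 :=
        mul_nonpos_iff.mpr (Or.inl ⟨by positivity, hls⟩)
      linarith [hRHS0]
    · rcases lt_or_ge j (k * C) with hjK | hjK
      · -- small j
        have hjr : (j:ℝ) ≤ (k:ℝ) * (C:ℝ) := by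
          have : (j:ℝ) ≤ ((k * C : ℕ):ℝ) := by exact_mod_cast hjK.le
          rwa [Nat.cast_mul] at this
        have h6 : (j:ℝ) * Real.log (lam*1*t) ≤ (k:ℝ)*(C:ℝ) * Real.log (lam*1*t) :=
          mul_le_mul_of_nonneg_right hjr hls.le
        have h7 : (k:ℝ)*(C:ℝ) * Real.log (lam*1*t) ≤
            (2*lam)*(C:ℝ) * (lam + W + Real.log (M 1)) := by
          apply mul_le_mul (by nlinarith) hS hls.le (by positivity)
        nlinarith [mul_nonneg (mul_nonneg (by positivity : (0:ℝ) ≤ 2*(C:ℝ)) hlam0.le) hW0,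
          mul_nonneg (mul_nonneg (by positivity : (0:ℝ) ≤ 2*(C:ℝ)) hlam0.le) hlogD]
      · -- main case
        set p : ℕ := j / (k * C) with hpdef
        have hKpos : 0 < k * C := by positivity
        have hp1 : 1 ≤ p := by
          rw [hpdef]; exact (Nat.one_le_div_iff hKpos).mpr hjK
        have hPr : (0:ℝ) < (p:ℝ) := by exact_mod_cast hp1
        have hjlow : k * C * p ≤ j := by
          rw [Nat.mul_comm (k * C) p, hpdef]
          exact Nat.div_mul_le_self j (k * C)
        have hjhigh : j < k * C * p + k * C := by
          have h8 := Nat.div_add_mod j (k * C)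
          rw [← hpdef] at h8
          calc j = k * C * p + j % (k * C) := h8.symm
            _ < k * C * p + k * C := Nat.add_lt_add_left (Nat.mod_lt j hKpos) _
        have hjcast : (j:ℝ) ≤ (k:ℝ)*(C:ℝ)*(p:ℝ) + (k:ℝ)*(C:ℝ) := by
          have : (j:ℝ) ≤ ((k * C * p + k * C : ℕ):ℝ) := by exact_mod_cast hjhigh.le
          push_cast at this; linarith
        -- base inequality from h2
        have base := Real.log_le_log (mul_pos hk0r (Real.rpow_pos_of_pos (hM.1 p) _)) (h2 p hp1)
        rw [log_prod3 hB0 hD0 (hN.1 (k*C*p)), Real.log_mul hk0r.ne'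
            (Real.rpow_pos_of_pos (hM.1 p) _).ne', Real.log_rpow (hM.1 p)] at base
        have hkCp0 : (0:ℝ) < (k:ℝ)*(C:ℝ)*(p:ℝ) := by positivity
        have base2 : (k:ℝ)*(C:ℝ)*(p:ℝ)*Real.log (k:ℝ) + (k:ℝ)*(C:ℝ)*Real.log (M p) ≤
            (k:ℝ)*(C:ℝ)*(p:ℝ)*Real.log B + (k:ℝ)*(C:ℝ)*Real.log D
              + Real.log (N (k*C*p)) := by
          have h10 := mul_le_mul_of_nonneg_left base hkCp0.le
          have e1 : (k:ℝ)*(C:ℝ)*(p:ℝ) * (Real.log (k:ℝ) + 1/(p:ℝ) * Real.log (M p)) =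
              (k:ℝ)*(C:ℝ)*(p:ℝ)*Real.log (k:ℝ) + (k:ℝ)*(C:ℝ)*Real.log (M p) := by
            field_simp
          have e2 : (k:ℝ)*(C:ℝ)*(p:ℝ) * (Real.log B + 1/(p:ℝ) * Real.log D
                + 1/((k:ℝ)*(C:ℝ)*(p:ℝ)) * Real.log (N (k*C*p))) =
              (k:ℝ)*(C:ℝ)*(p:ℝ)*Real.log B + (k:ℝ)*(C:ℝ)*Real.log D
                + Real.log (N (k*C*p)) := by
            field_simp
          linarith [h10, e1, e2]
        have hmono : Real.log (N (k*C*p)) ≤ Real.log (N j) :=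
          Real.log_le_log (hN.1 _) (M_mono hN hjlow)
        have h11 : (j:ℝ) * Real.log (lam*1*t) ≤
            ((k:ℝ)*(C:ℝ)*(p:ℝ) + (k:ℝ)*(C:ℝ)) * Real.log (lam*1*t) :=
          mul_le_mul_of_nonneg_right hjcast hls.le
        have h12 : (p:ℝ) * Real.log (B*t) - Real.log (M p) ≤ W := le_omega hM hBt p
        have q1 := mul_le_mul_of_nonneg_left h12 (by positivity : (0:ℝ) ≤ (k:ℝ)*(C:ℝ))
        have h13 : Real.log (lam*1*t) - Real.log (k:ℝ) + Real.log B - Real.log (B*t) ≤ 0 := by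
          rw [hlogs, Real.log_mul hB0.ne' ht0.ne']
          have h14 : Real.log lam ≤ Real.log (k:ℝ) := Real.log_le_log hlam0 hkr
          linarith
        have q2 := mul_le_mul_of_nonneg_left h13
          (by positivity : (0:ℝ) ≤ (k:ℝ)*(C:ℝ)*(p:ℝ))
        rw [mul_zero] at q2
        have hS0 : 0 ≤ Real.log (lam*1*t) + Real.log D + W := by linarith
        have q3 : (k:ℝ)*(C:ℝ) * (Real.log (lam*1*t) + Real.log D + W) ≤
            (2*lam)*(C:ℝ) * ((lam + W + Real.log (M 1)) + Real.log D + W) := by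
          apply mul_le_mul (by nlinarith) (by linarith) hS0 (by positivity)
        linarith [h11, hmono, base2, q1, q2, q3, hNj]
end S17

/-- Theorem 5.1: characterization of the mixed `(α1)` condition. -/
theorem stmt17 (M N : ℕ → ℝ) (hM : IsLC M) (hN : IsLC N) :
    List.TFAE [
      ∃ A : ℝ, 1 ≤ A ∧ ∃ B : ℝ, 1 ≤ B ∧ ∃ C : ℝ, 1 ≤ C ∧ ∀ lam : ℝ, 1 ≤ lam →
        ∃ D : ℝ, 1 ≤ D ∧ ∀ t : ℝ, 0 ≤ t →
          omegaM N (lam * C * t) ≤ B * lam * omegaM M (A * t) + D * lam,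
      ∃ C : ℕ, 1 ≤ C ∧ ∃ B : ℝ, 1 ≤ B ∧ ∀ lam : ℕ, 1 ≤ lam → ∃ D : ℝ, 1 ≤ D ∧
        ∀ p : ℕ, 1 ≤ p → (lam : ℝ) * (M p) ^ (1 / (p : ℝ)) ≤
          B * D ^ (1 / (p : ℝ)) * (N (lam * C * p)) ^ (1 / ((lam : ℝ) * C * p)),
      ∃ C : ℕ, 1 ≤ C ∧ ∃ A : ℝ, 1 ≤ A ∧ ∀ lam : ℕ, 1 ≤ lam → ∃ D : ℝ, 1 ≤ D ∧
        ∀ p : ℕ, 1 ≤ p → (mseq M p) ^ (1 / (p : ℝ)) ≤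
          A * D ^ (1 / (p : ℝ)) * (mseq N (lam * C * p)) ^ (1 / ((lam : ℝ) * C * p))] := by
  tfae_have 1 → 2
  · exact fun h => S17.imp12 hM hN h
  tfae_have 2 → 3
  · exact fun h => S17.imp23 hM hN h
  tfae_have 3 → 2
  · exact fun h => S17.imp32 hM hN h
  tfae_have 2 → 1
  · exact fun h => S17.imp21 hM hN h
  tfae_finish
end

section
/- Let M : ℕ → ℝ be a weight sequence in the class LC, with m_p := M_p/p!. Then the associated weight function ω_M satisfies (α1), i.e. there exists C ≥ 1 such that for every λ ≥ 1 there exists D ≥ 1 with ω_M(λ·t) ≤ C·λ·ω_M(t) + D·λ for all t ≥ 0, if and only if there exist a positive integer C and B ≥ 1 such that for every positive integer λ there exists D ≥ 1 with λ·(M_p)^{1/p} ≤ B·D^{1/p}·(M_{λ·C·p})^{1/(λ·C·p)} for all p ≥ 1 (equivalently, the same condition for m: there exist a positive integer C and A ≥ 1 such that for every positive integer λ there exists D ≥ 1 with (m_p)^{1/p} ≤ A·D^{1/p}·(m_{λ·C·p})^{1/(λ·C·p)} for all p ≥ 1). -/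
open Filter Real Asymptotics

namespace S18

noncomputable def L (M : ℕ → ℝ) (p : ℕ) : ℝ := Real.log (M p)
noncomputable def dd (M : ℕ → ℝ) (p : ℕ) : ℝ := L M p - L M (p - 1)

variable {M : ℕ → ℝ}

lemma L0 (hM : IsLC M) : L M 0 = 0 := by simp [L, hM.2.1]

lemma dmono (hM : IsLC M) : ∀ p, 1 ≤ p → dd M p ≤ dd M (p + 1) := by
  intro p hp
  have h := hM.2.2.2.1 p hp
  have h1 : 2 * L M p ≤ L M (p-1) + L M (p+1) := by
    have := Real.log_le_log (pow_pos (hM.1 p) 2) h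
    rwa [Real.log_pow, Real.log_mul (ne_of_gt (hM.1 _)) (ne_of_gt (hM.1 _))] at this
  simp only [dd, Nat.add_sub_cancel]
  linarith

lemma dd1 (hM : IsLC M) : 0 ≤ dd M 1 := by
  have : L M 0 ≤ L M 1 := Real.log_le_log (hM.1 0) hM.2.2.1
  simp only [dd]; simpa [L0 hM] using this

lemma dmono' (hM : IsLC M) : ∀ i j, 1 ≤ i → i ≤ j → dd M i ≤ dd M j := by
  intro i j hi hij
  induction j, hij using Nat.le_induction with
  | base => exact le_rfl
  | succ n hn ih => exact le_trans ih (dmono hM n (le_trans hi hn))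

lemma ddnonneg (hM : IsLC M) : ∀ j, 1 ≤ j → 0 ≤ dd M j :=
  fun j hj => le_trans (dd1 hM) (dmono' hM 1 j le_rfl hj)

lemma chunk_le (hM : IsLC M) (r : ℝ) (a : ℕ) : ∀ b, a ≤ b → (∀ j, a < j → j ≤ b → dd M j ≤ r) →
    L M b - L M a ≤ ((b : ℝ) - a) * r := by
  intro b hab
  induction b, hab using Nat.le_induction with
  | base => intro _; simp
  | succ n hn ih =>
    intro hr
    have h1 : L M n - L M a ≤ ((n : ℝ) - a) * r :=
      ih (fun j h1 h2 => hr j h1 (le_trans h2 (Nat.le_succ n)))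
    have h2 : dd M (n + 1) ≤ r := hr (n+1) (Nat.lt_succ_of_le hn) le_rfl
    have h3 : dd M (n + 1) = L M (n+1) - L M n := by simp [dd]
    push_cast
    nlinarith

lemma chunk_ge (hM : IsLC M) (r : ℝ) (a : ℕ) : ∀ b, a ≤ b → (∀ j, a < j → j ≤ b → r ≤ dd M j) →
    ((b : ℝ) - a) * r ≤ L M b - L M a := by
  intro b hab
  induction b, hab using Nat.le_induction with
  | base => intro _; simp
  | succ n hn ih =>
    intro hr
    have h1 : ((n : ℝ) - a) * r ≤ L M n - L M a :=
      ih (fun j h1 h2 => hr j h1 (le_trans h2 (Nat.le_succ n)))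
    have h2 : r ≤ dd M (n + 1) := hr (n+1) (Nat.lt_succ_of_le hn) le_rfl
    have h3 : dd M (n + 1) = L M (n+1) - L M n := by simp [dd]
    push_cast
    nlinarith

lemma Lmono (hM : IsLC M) : ∀ p q : ℕ, p ≤ q → L M p ≤ L M q := by
  intro p q h
  have := chunk_ge hM 0 p q h (fun j h1 _ => ddnonneg hM j (lt_of_le_of_lt (Nat.zero_le p) h1))
  have hc : (0:ℝ) ≤ ((q:ℝ) - p) := by
    have : (p:ℝ) ≤ q := by exact_mod_cast h
    linarith
  nlinarith

lemma Lnonneg (hM : IsLC M) : ∀ p, 0 ≤ L M p := by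
  intro p
  have := Lmono hM 0 p (Nat.zero_le p)
  rwa [L0 hM] at this

lemma L_le_dd (hM : IsLC M) : ∀ p : ℕ, L M p ≤ (p : ℝ) * dd M p := by
  intro p
  rcases Nat.eq_zero_or_pos p with h | h
  · simp [h, L0 hM]
  · have := chunk_le hM (dd M p) 0 p (Nat.zero_le p)
      (fun j h1 h2 => dmono' hM j p h1 h2)
    rw [L0 hM] at this
    simpa using this

lemma hdiv_mono (hM : IsLC M) : ∀ p q : ℕ, 1 ≤ p → p ≤ q → L M p / p ≤ L M q / q := by
  intro p q hp hpq
  induction q, hpq using Nat.le_induction with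
  | base => exact le_rfl
  | succ n hn ih =>
    refine le_trans ih ?_
    have hn1 : 1 ≤ n := le_trans hp hn
    have hnp : (0:ℝ) < n := by exact_mod_cast hn1
    rw [div_le_div_iff₀ hnp (by positivity)]
    have h1 : L M n ≤ (n:ℝ) * dd M n := L_le_dd hM n
    have h2 : dd M n ≤ dd M (n+1) := dmono hM n hn1
    have h3 : dd M (n + 1) = L M (n+1) - L M n := by simp [dd]
    push_cast
    nlinarith


noncomputable def g (M : ℕ → ℝ) (t : ℝ) (p : ℕ) : ℝ := (p : ℝ) * Real.log t - L M p

lemma g_le_zero (hM : IsLC M) {t : ℝ} (ht : 0 < t) :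
    ∃ P : ℕ, 1 ≤ P ∧ ∀ p, P ≤ p → g M t p ≤ 0 := by
  have h := hM.2.2.2.2.eventually (Filter.eventually_ge_atTop (max t 1))
  rw [Filter.eventually_atTop] at h
  obtain ⟨P, hP⟩ := h
  refine ⟨max P 1, le_max_right _ _, fun p hp => ?_⟩
  have hp1 : 1 ≤ p := le_trans (le_max_right P 1) hp
  have hpP : P ≤ p := le_trans (le_max_left P 1) hp
  have h2 : max t 1 ≤ M p ^ (1 / (p:ℝ)) := hP p hpP
  have hppos : (0:ℝ) < p := by exact_mod_cast hp1
  have h3 : Real.log t ≤ Real.log (M p ^ (1 / (p:ℝ))) :=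
    Real.log_le_log ht (le_trans (le_max_left t 1) h2)
  rw [Real.log_rpow (hM.1 p)] at h3
  have : (p:ℝ) * Real.log t ≤ L M p := by
    have h4 := mul_le_mul_of_nonneg_left h3 (le_of_lt hppos)
    calc (p:ℝ) * Real.log t ≤ (p:ℝ) * (1 / (p:ℝ) * Real.log (M p)) := h4
      _ = L M p := by rw [L]; field_simp
  simp only [g]; linarith

lemma g_bdd (hM : IsLC M) {t : ℝ} (ht : 0 < t) : BddAbove (Set.range (g M t)) := by
  obtain ⟨P, _, hP⟩ := g_le_zero hM ht
  refine ⟨max ((Finset.range (P+1)).sup' (by simp) (g M t)) 0, ?_⟩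
  rintro x ⟨p, rfl⟩
  rcases le_or_gt p P with h | h
  · exact le_trans (Finset.le_sup' (g M t) (Finset.mem_range.2 (Nat.lt_succ_of_le h)))
      (le_max_left _ _)
  · exact le_trans (hP p (le_of_lt h)) (le_max_right _ _)

lemma omega_eq (hM : IsLC M) {t : ℝ} (ht : 0 < t) : omegaM M t = ⨆ p, g M t p := by
  rw [omegaM, if_neg (ne_of_gt ht)]
  congr 1; funext p
  rw [Real.log_div (by positivity) (ne_of_gt (hM.1 p)), Real.log_pow]
  rfl

lemma le_omega (hM : IsLC M) {t : ℝ} (ht : 0 < t) (p : ℕ) :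
    (p : ℝ) * Real.log t - L M p ≤ omegaM M t := by
  rw [omega_eq hM ht]
  exact le_ciSup (g_bdd hM ht) p

lemma omega_le (hM : IsLC M) {t : ℝ} (ht : 0 < t) {c : ℝ}
    (h : ∀ p : ℕ, (p : ℝ) * Real.log t - L M p ≤ c) : omegaM M t ≤ c := by
  rw [omega_eq hM ht]
  exact ciSup_le h

lemma omega_nonneg (hM : IsLC M) {t : ℝ} (ht : 0 ≤ t) : 0 ≤ omegaM M t := by
  rcases eq_or_lt_of_le ht with rfl | h
  · simp [omegaM]
  · have := le_omega hM h 0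
    simpa [L0 hM] using this

lemma omega_mono (hM : IsLC M) {t s : ℝ} (ht : 0 < t) (hts : t ≤ s) :
    omegaM M t ≤ omegaM M s := by
  have hs : 0 < s := lt_of_lt_of_le ht hts
  refine omega_le hM ht (fun p => le_trans ?_ (le_omega hM hs p))
  have := Real.log_le_log ht hts
  nlinarith [Nat.cast_nonneg (α := ℝ) p]

lemma omega_mu (hM : IsLC M) {p : ℕ} (hp : 1 ≤ p) :
    omegaM M (Real.exp (dd M p)) ≤ (p:ℝ) * dd M p - L M p := by
  refine omega_le hM (Real.exp_pos _) (fun k => ?_)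
  rw [Real.log_exp]
  rcases le_or_gt k p with h | h
  · have := chunk_le hM (dd M p) k p h (fun j h1 h2 => dmono' hM j p (lt_of_le_of_lt (Nat.zero_le k) h1) h2)
    have hkp : (k:ℝ) ≤ p := by exact_mod_cast h
    nlinarith [ddnonneg hM p hp]
  · have := chunk_ge hM (dd M p) p k (le_of_lt h)
      (fun j h1 _ => dmono' hM p j hp (le_of_lt h1))
    have hkp : (p:ℝ) ≤ k := by exact_mod_cast le_of_lt h
    nlinarith


def A1 (M : ℕ → ℝ) : Prop :=
  ∃ C : ℝ, 1 ≤ C ∧ ∀ lam : ℝ, 1 ≤ lam → ∃ D : ℝ, 1 ≤ D ∧ ∀ t : ℝ, 0 ≤ t →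
    omegaM M (lam * t) ≤ C * lam * omegaM M t + D * lam

def CondM (M : ℕ → ℝ) : Prop :=
  ∃ C : ℕ, 1 ≤ C ∧ ∃ B : ℝ, 1 ≤ B ∧ ∀ lam : ℕ, 1 ≤ lam → ∃ D : ℝ, 1 ≤ D ∧
    ∀ p : ℕ, 1 ≤ p → (lam : ℝ) * (M p) ^ (1 / (p : ℝ)) ≤
      B * D ^ (1 / (p : ℝ)) * (M (lam * C * p)) ^ (1 / ((lam : ℝ) * C * p))

lemma lemA (hM : IsLC M) (h : A1 M) : CondM M := by
  obtain ⟨C₀, hC₀, hA⟩ := h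
  refine ⟨⌈C₀⌉₊, Nat.one_le_ceil_iff.2 (by linarith), 1, le_rfl, fun lam hlam => ?_⟩
  set C : ℕ := ⌈C₀⌉₊ with hCdef
  have hCC : C₀ ≤ (C:ℝ) := Nat.le_ceil _
  have hC1 : (1:ℝ) ≤ C := le_trans hC₀ hCC
  have hlamR : (1:ℝ) ≤ (lam:ℝ) := by exact_mod_cast hlam
  obtain ⟨D₀, hD₀, hD⟩ := hA (lam:ℝ) hlamR
  refine ⟨Real.exp D₀, by nlinarith [Real.add_one_le_exp D₀], fun p hp => ?_⟩
  set q : ℕ := lam * C * p with hqdef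
  have hpR : (1:ℝ) ≤ (p:ℝ) := by exact_mod_cast hp
  have hpPos : (0:ℝ) < p := by linarith
  have hq : (q:ℝ) = (lam:ℝ) * C * p := by push_cast [hqdef]; ring
  have hqPos : (0:ℝ) < q := by rw [hq]; positivity
  -- main log inequality
  have h1 : omegaM M (Real.exp (dd M p)) ≤ (p:ℝ) * dd M p - L M p := omega_mu hM hp
  have h2 := hD (Real.exp (dd M p)) (le_of_lt (Real.exp_pos _))
  have h3 := le_omega hM (t := (lam:ℝ) * Real.exp (dd M p)) (by positivity) q
  rw [Real.log_mul (by linarith) (ne_of_gt (Real.exp_pos _)), Real.log_exp] at h3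
  have hS : 0 ≤ (p:ℝ) * dd M p - L M p := by linarith [L_le_dd hM p]
  have hw : 0 ≤ omegaM M (Real.exp (dd M p)) := omega_nonneg hM (le_of_lt (Real.exp_pos _))
  have hC₀lam : (0:ℝ) ≤ C₀ * lam := by nlinarith
  have h4 : (q:ℝ) * (Real.log lam + dd M p) - L M q ≤
      C₀ * (lam:ℝ) * ((p:ℝ) * dd M p - L M p) + D₀ * lam := by
    calc (q:ℝ) * (Real.log lam + dd M p) - L M q ≤ omegaM M ((lam:ℝ) * Real.exp (dd M p)) := h3
      _ ≤ C₀ * lam * omegaM M (Real.exp (dd M p)) + D₀ * lam := h2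
      _ ≤ C₀ * lam * ((p:ℝ) * dd M p - L M p) + D₀ * lam := by
          nlinarith [mul_le_mul_of_nonneg_left h1 hC₀lam]
  rw [hq] at h4
  have h4p := mul_le_mul_of_nonneg_left h4 (le_of_lt hpPos)
  have hA1 : 0 ≤ (lam:ℝ)*(p:ℝ)*((C:ℝ) - C₀)*((p:ℝ)*dd M p - L M p) := by
    apply mul_nonneg _ hS
    apply mul_nonneg (by positivity)
    linarith
  have hA2 : (0:ℝ) ≤ D₀*(lam:ℝ)*(p:ℝ)*((C:ℝ)-1) := by
    apply mul_nonneg _ (by linarith)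
    positivity
  have key2 : (p:ℝ)*(q:ℝ)*Real.log lam + (q:ℝ)*Real.log (M p) ≤
      (q:ℝ)*D₀ + (p:ℝ)*Real.log (M q) := by
    have eL : L M p = Real.log (M p) := rfl
    have eL2 : L M q = Real.log (M q) := rfl
    rw [hq, ← eL, ← eL2]
    nlinarith [h4p, hA1, hA2]
  -- convert to rpow form
  have hX : (0:ℝ) < (lam:ℝ) * (M p) ^ (1 / (p:ℝ)) :=
    mul_pos (by linarith) (Real.rpow_pos_of_pos (hM.1 p) _)
  have hY : (0:ℝ) < 1 * (Real.exp D₀) ^ (1 / (p:ℝ)) * (M q) ^ (1 / ((lam:ℝ) * C * p)) := by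
    rw [one_mul]
    exact mul_pos (Real.rpow_pos_of_pos (Real.exp_pos _) _)
      (Real.rpow_pos_of_pos (hM.1 q) _)
  rw [← Real.log_le_log_iff hX hY, Real.log_mul (by linarith) (ne_of_gt (Real.rpow_pos_of_pos (hM.1 p) _)),
    one_mul, Real.log_mul (ne_of_gt (Real.rpow_pos_of_pos (Real.exp_pos _) _)) (ne_of_gt (Real.rpow_pos_of_pos (hM.1 q) _)),
    Real.log_rpow (hM.1 p), Real.log_rpow (Real.exp_pos _), Real.log_rpow (hM.1 q),
    Real.log_exp, ← hq]
  have h5 : ((p:ℝ)*q) * (Real.log lam + 1/(p:ℝ) * Real.log (M p)) ≤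
      ((p:ℝ)*q) * (1/(p:ℝ) * D₀ + 1/(q:ℝ) * Real.log (M q)) := by
    have e1 : ((p:ℝ)*q) * (Real.log lam + 1/(p:ℝ) * Real.log (M p)) =
        (p:ℝ)*(q:ℝ)*Real.log lam + (q:ℝ) * Real.log (M p) := by
      field_simp
    have e2 : ((p:ℝ)*q) * (1/(p:ℝ) * D₀ + 1/(q:ℝ) * Real.log (M q)) =
        (q:ℝ)*D₀ + (p:ℝ) * Real.log (M q) := by
      field_simp
    rw [e1, e2]; exact key2
  exact le_of_mul_le_mul_left h5 (by positivity)


-- reduced log-form condition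
lemma lemB_step1 (hM : IsLC M) (h : CondM M) :
    ∃ C' : ℕ, 1 ≤ C' ∧ ∀ lam : ℕ, 1 ≤ lam → ∃ d : ℝ, 0 ≤ d ∧ ∀ p : ℕ, 1 ≤ p →
      Real.log lam + L M p / p ≤ d / p + L M (lam * C' * p) / (lam * C' * p) := by
  obtain ⟨C, hC, B, hB, hcond⟩ := h
  set N : ℕ := ⌈B⌉₊ with hNdef
  have hNB : B ≤ (N:ℝ) := Nat.le_ceil _
  have hN1 : 1 ≤ N := Nat.one_le_ceil_iff.2 (by linarith)
  refine ⟨N * C, Nat.one_le_iff_ne_zero.2 (by positivity), fun lam hlam => ?_⟩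
  obtain ⟨D, hD1, hD⟩ := hcond (lam * N) (Nat.one_le_iff_ne_zero.2 (by positivity))
  refine ⟨Real.log D, Real.log_nonneg hD1, fun p hp => ?_⟩
  have hineq := hD p hp
  have hqeq : lam * N * C * p = lam * (N * C) * p := by ring
  rw [hqeq] at hineq
  set q : ℕ := lam * (N * C) * p with hqdef
  have hpPos : (0:ℝ) < p := by exact_mod_cast hp
  have hlamPos : (0:ℝ) < lam := by exact_mod_cast hlam
  have hNPos : (0:ℝ) < N := by exact_mod_cast hN1
  have hCPos : (0:ℝ) < C := by exact_mod_cast hC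
  have hqPos : (0:ℝ) < q := by
    have : 1 ≤ q := Nat.one_le_iff_ne_zero.2 (by positivity)
    exact_mod_cast this
  have hqcast : ((lam * N : ℕ) : ℝ) * C * p = (q:ℝ) := by push_cast [hqdef]; ring
  rw [hqcast] at hineq
  -- take logs of hineq
  have hXpos : (0:ℝ) < ((lam * N : ℕ):ℝ) * M p ^ (1/(p:ℝ)) := by
    have h1 : (0:ℝ) < ((lam * N : ℕ):ℝ) := by push_cast; positivity
    exact mul_pos h1 (Real.rpow_pos_of_pos (hM.1 p) _)
  have hYpos : (0:ℝ) < B * D ^ (1/(p:ℝ)) * M q ^ (1/(q:ℝ)) := by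
    exact mul_pos (mul_pos (by linarith) (Real.rpow_pos_of_pos (by linarith) _))
      (Real.rpow_pos_of_pos (hM.1 q) _)
  rw [← Real.log_le_log_iff hXpos hYpos,
    Real.log_mul (by positivity) (ne_of_gt (Real.rpow_pos_of_pos (hM.1 p) _)),
    Real.log_mul (ne_of_gt (mul_pos (by linarith : (0:ℝ) < B) (Real.rpow_pos_of_pos (by linarith : (0:ℝ) < D) _)))
      (ne_of_gt (Real.rpow_pos_of_pos (hM.1 q) _)),
    Real.log_mul (by linarith : B ≠ 0) (ne_of_gt (Real.rpow_pos_of_pos (by linarith : (0:ℝ) < D) _)),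
    Real.log_rpow (hM.1 p), Real.log_rpow (by linarith : (0:ℝ) < D), Real.log_rpow (hM.1 q)]
    at hineq
  have hlogN : Real.log B ≤ Real.log N := Real.log_le_log (by linarith) hNB
  have hlog_lamN : Real.log ((lam * N : ℕ):ℝ) = Real.log lam + Real.log N := by
    push_cast
    exact Real.log_mul (ne_of_gt hlamPos) (ne_of_gt hNPos)
  rw [hlog_lamN] at hineq
  have hqcast2 : (lam:ℝ) * ((N * C : ℕ):ℝ) * p = (q:ℝ) := by push_cast [hqdef]; ring
  rw [hqcast2]
  have e1 : L M p / p = 1/(p:ℝ) * Real.log (M p) := by rw [L]; ring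
  have e2 : L M q / q = 1/(q:ℝ) * Real.log (M q) := by rw [L]; ring
  rw [e1, e2]
  have e3 : Real.log D / p = 1/(p:ℝ) * Real.log D := by ring
  rw [e3]
  linarith


lemma lemB_step2 (hM : IsLC M) {C' : ℕ} (hC' : 1 ≤ C') {lam : ℕ} (hlam : 1 ≤ lam)
    {d : ℝ} (hd : 0 ≤ d)
    (hcond : ∀ p : ℕ, 1 ≤ p →
      Real.log lam + L M p / p ≤ d / p + L M (lam * C' * p) / (lam * C' * p))
    {t : ℝ} (ht : 0 < t) :
    omegaM M (lam * t) ≤ 2*C'*lam * omegaM M t + lam * (C' * Real.log lam + 2*C'*d + 1) := by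
  have hlamPos : (0:ℝ) < lam := by exact_mod_cast hlam
  have hC'Pos : (0:ℝ) < C' := by exact_mod_cast hC'
  have hw0 : 0 ≤ omegaM M t := omega_nonneg hM (le_of_lt ht)
  have hloglam : 0 ≤ Real.log lam := Real.log_nonneg (by exact_mod_cast hlam)
  have hL1 : 0 ≤ L M 1 := Lnonneg hM 1
  have hlogt : Real.log t - L M 1 ≤ omegaM M t := by
    have := le_omega hM ht 1; simpa using this
  refine omega_le hM (by positivity) (fun k => ?_)
  rw [Real.log_mul (ne_of_gt hlamPos) (ne_of_gt ht)]
  have hRHSpos : 0 ≤ 2*(C':ℝ)*lam * omegaM M t + lam * (C' * Real.log lam + 2*C'*d + 1) := by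
    positivity
  rcases Nat.eq_zero_or_pos k with rfl | hk1
  · simpa [L0 hM] using hRHSpos
  have hkPos : (0:ℝ) < k := by exact_mod_cast hk1
  rcases Nat.lt_or_ge k (lam * C') with hcase | hcase
  · -- small k
    have hLk : (k:ℝ) * L M 1 ≤ L M k := by
      have := hdiv_mono hM 1 k le_rfl hk1
      rw [Nat.cast_one, div_one] at this
      calc (k:ℝ) * L M 1 ≤ (k:ℝ) * (L M k / k) := by
            exact mul_le_mul_of_nonneg_left this (le_of_lt hkPos)
        _ = L M k := by field_simp
    have hkb : (k:ℝ) ≤ (lam:ℝ) * C' := by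
      have : (k:ℝ) ≤ ((lam * C' : ℕ):ℝ) := by exact_mod_cast le_of_lt hcase
      push_cast at this; linarith
    rcases le_or_gt (Real.log lam + Real.log t - L M 1) 0 with hsg | hsg
    · have : (k:ℝ) * (Real.log lam + Real.log t) - L M k ≤ 0 := by nlinarith
      linarith
    · have h1 : (k:ℝ) * (Real.log lam + Real.log t) - L M k ≤
          (k:ℝ) * (Real.log lam + Real.log t - L M 1) := by nlinarith
      have h2 : (k:ℝ) * (Real.log lam + Real.log t - L M 1) ≤
          ((lam:ℝ) * C') * (Real.log lam + Real.log t - L M 1) :=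
        mul_le_mul_of_nonneg_right hkb (le_of_lt hsg)
      have h3 : ((lam:ℝ) * C') * (Real.log lam + Real.log t - L M 1) ≤
          ((lam:ℝ) * C') * (Real.log lam + omegaM M t) := by
        apply mul_le_mul_of_nonneg_left _ (by positivity)
        linarith
      have h4 : ((lam:ℝ) * C') * (Real.log lam + omegaM M t) ≤
          2*(C':ℝ)*lam * omegaM M t + lam * (C' * Real.log lam + 2*C'*d + 1) := by
        nlinarith
      linarith
  · -- large k
    set p : ℕ := k / (lam * C') with hpdef
    have hCC : 1 ≤ lam * C' := Nat.one_le_iff_ne_zero.2 (by positivity)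
    have hp1 : 1 ≤ p := (Nat.one_le_div_iff (by omega)).2 hcase
    have hplow : lam * C' * p ≤ k := by
      rw [hpdef, mul_comm]
      exact Nat.div_mul_le_self k (lam * C')
    have hphigh : k < lam * C' * p + lam * C' := by
      have h1 : lam * C' * p + k % (lam * C') = k := by
        rw [hpdef]; exact Nat.div_add_mod k (lam * C')
      have h2 := Nat.mod_lt k (show 0 < lam * C' by omega)
      omega
    have hpPos : (0:ℝ) < p := by exact_mod_cast hp1
    have hk2 : (k:ℝ) ≤ 2 * lam * C' * p := by
      have ha : (k:ℝ) < (lam:ℝ) * C' * p + (lam:ℝ) * C' := by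
        have := hphigh
        have hcast : ((lam * C' * p + lam * C' : ℕ):ℝ) = (lam:ℝ)*C'*p + (lam:ℝ)*C' := by
          push_cast; ring
        calc (k:ℝ) < ((lam * C' * p + lam * C' : ℕ):ℝ) := by exact_mod_cast this
          _ = (lam:ℝ)*C'*p + (lam:ℝ)*C' := hcast
      have hb : (lam:ℝ) * C' * 1 ≤ (lam:ℝ) * C' * p := by
        apply mul_le_mul_of_nonneg_left _ (by positivity)
        exact_mod_cast hp1
      nlinarith
    have hqPos : (0:ℝ) < ((lam * C' * p : ℕ):ℝ) := by
      have : 1 ≤ lam * C' * p := Nat.one_le_iff_ne_zero.2 (by positivity)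
      exact_mod_cast this
    have hqc : ((lam * C' * p : ℕ):ℝ) = (lam:ℝ)*C'*p := by push_cast; ring
    have hmono := hdiv_mono hM (lam * C' * p) k (Nat.one_le_iff_ne_zero.2 (by positivity)) hplow
    rw [hqc] at hmono
    have hstep := hcond p hp1
    have hLk : (k:ℝ) * (Real.log lam + L M p / p - d / p) ≤ L M k := by
      have h5 : Real.log lam + L M p / p - d / p ≤ L M k / k := by linarith
      calc (k:ℝ) * (Real.log lam + L M p / p - d / p) ≤ (k:ℝ) * (L M k / k) :=
            mul_le_mul_of_nonneg_left h5 (le_of_lt hkPos)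
        _ = L M k := by field_simp
    have hterm : (k:ℝ) * (Real.log lam + Real.log t) - L M k ≤
        (k:ℝ) * (Real.log t - L M p / p) + (k:ℝ) * (d / p) := by nlinarith
    have hdp : (k:ℝ) * (d / p) ≤ 2 * lam * C' * d := by
      calc (k:ℝ) * (d / p) ≤ (2 * lam * C' * p) * (d / p) :=
            mul_le_mul_of_nonneg_right hk2 (by positivity)
        _ = 2 * lam * C' * d := by field_simp
    have hmain : (k:ℝ) * (Real.log t - L M p / p) ≤ 2*C'*lam * omegaM M t := by
      rcases le_or_gt (Real.log t - L M p / p) 0 with hsg | hsg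
      · exact le_trans (mul_nonpos_of_nonneg_of_nonpos (le_of_lt hkPos) hsg) (by positivity)
      · have h6 : (k:ℝ) * (Real.log t - L M p / p) ≤
            (2 * lam * C' * p) * (Real.log t - L M p / p) :=
          mul_le_mul_of_nonneg_right hk2 (le_of_lt hsg)
        have e4 : ((2:ℝ) * lam * C' * p) * (Real.log t - L M p / p) =
            2 * lam * C' * ((p:ℝ) * Real.log t - L M p) := by field_simp
        have h7 : (p:ℝ) * Real.log t - L M p ≤ omegaM M t := le_omega hM ht p
        rw [e4] at h6
        have h8 : 2*(lam:ℝ)*C' * ((p:ℝ) * Real.log t - L M p) ≤ 2*(lam:ℝ)*C' * omegaM M t :=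
          mul_le_mul_of_nonneg_left h7 (by positivity)
        linarith
    have hx1 : 0 ≤ (lam:ℝ) * (C':ℝ) * Real.log lam := by positivity
    linarith


lemma lemB (hM : IsLC M) (h : CondM M) : A1 M := by
  obtain ⟨C', hC', hred⟩ := lemB_step1 hM h
  have hC'R : (1:ℝ) ≤ C' := by exact_mod_cast hC'
  refine ⟨4 * C', by linarith, fun lam hlam => ?_⟩
  set n : ℕ := ⌈lam⌉₊ with hndef
  have hn1 : 1 ≤ n := Nat.one_le_ceil_iff.2 (by linarith)
  have hn1R : (1:ℝ) ≤ n := by exact_mod_cast hn1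
  have hln : lam ≤ n := Nat.le_ceil lam
  have hn2 : (n:ℝ) ≤ 2 * lam := by
    have := Nat.ceil_lt_add_one (by linarith : (0:ℝ) ≤ lam)
    rw [← hndef] at this
    linarith
  obtain ⟨d, hd, hcnd⟩ := hred n hn1
  set E : ℝ := (C':ℝ) * Real.log n + 2*C'*d + 1 with hEdef
  have hlogn : 0 ≤ Real.log n := Real.log_nonneg hn1R
  have hE1 : 1 ≤ E := by
    have : 0 ≤ (C':ℝ) * Real.log n := by positivity
    have : 0 ≤ 2*(C':ℝ)*d := by positivity
    simp only [hEdef]; linarith [mul_nonneg (by positivity : (0:ℝ) ≤ (C':ℝ)) hlogn]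
  refine ⟨2*E, by linarith, fun t ht => ?_⟩
  rcases eq_or_lt_of_le ht with h0 | h0
  · rw [← h0, mul_zero]
    have : omegaM M 0 = 0 := by simp [omegaM]
    rw [this]
    nlinarith
  · have hw := omega_nonneg hM (le_of_lt h0)
    have hmono : omegaM M (lam * t) ≤ omegaM M (n * t) := by
      apply omega_mono hM (by positivity)
      apply mul_le_mul_of_nonneg_right hln (le_of_lt h0)
    have hstep := lemB_step2 hM hC' hn1 hd hcnd h0
    rw [← hEdef] at hstep
    have b1' := mul_le_mul_of_nonneg_left (mul_le_mul_of_nonneg_right hn2 hw)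
      (by positivity : (0:ℝ) ≤ 2*(C':ℝ))
    have b1 : 2*(C':ℝ)*(n:ℝ) * omegaM M t ≤ 4*C'*lam* omegaM M t := by linarith
    have b2' := mul_le_mul_of_nonneg_right hn2 (by linarith : (0:ℝ) ≤ E)
    have b2 : (n:ℝ)*E ≤ 2*E*lam := by linarith
    calc omegaM M (lam * t) ≤ omegaM M (n * t) := hmono
      _ ≤ 2*C'*n * omegaM M t + n * E := hstep
      _ ≤ 4*C'*lam* omegaM M t + 2*E*lam := by linarith
      _ = 4 * ↑C' * lam * omegaM M t + 2 * E * lam := by ring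


lemma pow_le_exp_mul_factorial : ∀ n : ℕ, (n:ℝ)^n ≤ Real.exp n * n.factorial := by
  intro n
  induction n with
  | zero => simp
  | succ n ih =>
    rcases Nat.eq_zero_or_pos n with rfl | hn
    · norm_num [Nat.factorial]
    · have hnR : (1:ℝ) ≤ n := by exact_mod_cast hn
      have hkey : ((n:ℝ)+1)^n ≤ Real.exp 1 * (n:ℝ)^n := by
        have h1 : (1:ℝ) + 1/n ≤ Real.exp (1/(n:ℝ)) := by
          have := Real.add_one_le_exp (1/(n:ℝ)); linarith
        have h2 : ((1:ℝ) + 1/n)^n ≤ (Real.exp (1/(n:ℝ)))^n :=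
          pow_le_pow_left₀ (by positivity) h1 n
        have h3 : (Real.exp (1/(n:ℝ)))^n = Real.exp 1 := by
          rw [← Real.exp_nat_mul]
          congr 1
          field_simp
        have h4 : ((n:ℝ)+1)^n = (n:ℝ)^n * ((1:ℝ) + 1/n)^n := by
          rw [← mul_pow]
          congr 1
          field_simp
        rw [h3] at h2
        rw [h4]
        have h5 := mul_le_mul_of_nonneg_left h2
          (le_of_lt (pow_pos (by linarith : (0:ℝ) < (n:ℝ)) n))
        linarith
      have hfac : ((n+1:ℕ).factorial : ℝ) = ((n:ℝ)+1) * n.factorial := by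
        rw [Nat.factorial_succ]; push_cast; ring
      have hexp : Real.exp ((n:ℕ)+1:ℕ) = Real.exp 1 * Real.exp n := by
        push_cast
        rw [← Real.exp_add]; ring_nf
      calc ((n+1:ℕ):ℝ)^(n+1) = ((n:ℝ)+1) * ((n:ℝ)+1)^n := by push_cast; ring
        _ ≤ ((n:ℝ)+1) * (Real.exp 1 * (n:ℝ)^n) := by
            apply mul_le_mul_of_nonneg_left hkey (by positivity)
        _ ≤ ((n:ℝ)+1) * (Real.exp 1 * (Real.exp n * n.factorial)) := by
            apply mul_le_mul_of_nonneg_left _ (by positivity)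
            apply mul_le_mul_of_nonneg_left ih (by positivity)
        _ = Real.exp ((n:ℕ)+1:ℕ) * ((n+1:ℕ).factorial : ℝ) := by
            rw [hfac, hexp]; ring

lemma factorial_pos_real (p : ℕ) : (0:ℝ) < (p.factorial : ℝ) := by
  exact_mod_cast p.factorial_pos

lemma logfact_le {p : ℕ} (hp : 1 ≤ p) :
    Real.log (p.factorial : ℝ) ≤ (p:ℝ) * Real.log p := by
  have h1 : ((p.factorial : ℕ):ℝ) ≤ ((p^p : ℕ):ℝ) := by exact_mod_cast p.factorial_le_pow
  have h2 : ((p^p : ℕ):ℝ) = (p:ℝ)^p := by push_cast; ring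
  rw [h2] at h1
  calc Real.log (p.factorial : ℝ) ≤ Real.log ((p:ℝ)^p) :=
        Real.log_le_log (factorial_pos_real p) h1
    _ = (p:ℝ) * Real.log p := by rw [Real.log_pow]

lemma logfact_ge (p : ℕ) :
    (p:ℝ) * Real.log p - p ≤ Real.log (p.factorial : ℝ) := by
  rcases Nat.eq_zero_or_pos p with rfl | hp
  · simp
  have hpR : (0:ℝ) < p := by exact_mod_cast hp
  have h1 := pow_le_exp_mul_factorial p
  have h2 := Real.log_le_log (pow_pos hpR p) h1
  rw [Real.log_pow, Real.log_mul (ne_of_gt (Real.exp_pos _)) (ne_of_gt (factorial_pos_real p)),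
    Real.log_exp] at h2
  linarith

lemma rpow_log_iff {a x y D A pr qr : ℝ} (ha : 0 < a) (hx : 0 < x) (hy : 0 < y)
    (hD : 0 < D) (hA : 0 < A) (hp : 0 < pr) (hq : 0 < qr) :
    a * x ^ (1/pr) ≤ A * D^(1/pr) * y^(1/qr) ↔
      Real.log a + Real.log x / pr ≤ Real.log A + Real.log D / pr + Real.log y / qr := by
  rw [← Real.log_le_log_iff (mul_pos ha (Real.rpow_pos_of_pos hx _))
      (mul_pos (mul_pos hA (Real.rpow_pos_of_pos hD _)) (Real.rpow_pos_of_pos hy _)),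
    Real.log_mul (ne_of_gt ha) (ne_of_gt (Real.rpow_pos_of_pos hx _)),
    Real.log_mul (ne_of_gt (mul_pos hA (Real.rpow_pos_of_pos hD _)))
      (ne_of_gt (Real.rpow_pos_of_pos hy _)),
    Real.log_mul (ne_of_gt hA) (ne_of_gt (Real.rpow_pos_of_pos hD _)),
    Real.log_rpow hx, Real.log_rpow hD, Real.log_rpow hy]
  have e1 : ∀ z : ℝ, 1/pr * z = z / pr := fun z => by ring
  have e2 : ∀ z : ℝ, 1/qr * z = z / qr := fun z => by ring
  rw [e1, e1, e2]

def Condm (M : ℕ → ℝ) : Prop :=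
  ∃ C : ℕ, 1 ≤ C ∧ ∃ A : ℝ, 1 ≤ A ∧ ∀ lam : ℕ, 1 ≤ lam → ∃ D : ℝ, 1 ≤ D ∧
    ∀ p : ℕ, 1 ≤ p → (mseq M p) ^ (1 / (p : ℝ)) ≤
      A * D ^ (1 / (p : ℝ)) * (mseq M (lam * C * p)) ^ (1 / ((lam : ℝ) * C * p))

lemma lemC (hM : IsLC M) (h : CondM M) : Condm M := by
  obtain ⟨C, hC, B, hB, hc⟩ := h
  have hCR : (1:ℝ) ≤ C := by exact_mod_cast hC
  have he : (2:ℝ) ≤ Real.exp 1 := by nlinarith [Real.add_one_le_exp 1]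
  have hBC : (1:ℝ) ≤ B * C := by nlinarith
  have hEBC : (1:ℝ) ≤ Real.exp 1 * B * C := by
    have h2 : (1:ℝ)*1 ≤ Real.exp 1 * (B*C) := mul_le_mul (by linarith) hBC zero_le_one (by linarith)
    nlinarith [h2]
  refine ⟨C, hC, Real.exp 1 * B * C, hEBC, fun lam hlam => ?_⟩
  obtain ⟨D, hD1, hD⟩ := hc lam hlam
  refine ⟨D, hD1, fun p hp => ?_⟩
  set q : ℕ := lam * C * p with hqdef
  have hq1 : 1 ≤ q := Nat.one_le_iff_ne_zero.2 (Nat.mul_ne_zero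
    (Nat.mul_ne_zero (Nat.one_le_iff_ne_zero.1 hlam) (Nat.one_le_iff_ne_zero.1 hC))
    (Nat.one_le_iff_ne_zero.1 hp))
  have hpPos : (0:ℝ) < p := by exact_mod_cast hp
  have hqPos : (0:ℝ) < q := by exact_mod_cast hq1
  have hlamPos : (0:ℝ) < lam := by exact_mod_cast hlam
  have hqcast : (lam:ℝ) * C * p = (q:ℝ) := by push_cast [hqdef]; ring
  have hDp := hD p hp
  rw [hqcast] at hDp
  have hlog := (rpow_log_iff hlamPos (hM.1 p) (hM.1 q) (by linarith : (0:ℝ) < D)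
    (by linarith : (0:ℝ) < B) hpPos hqPos).1 hDp
  have hmp : 0 < mseq M p := div_pos (hM.1 p) (factorial_pos_real p)
  have hmq : 0 < mseq M q := div_pos (hM.1 q) (factorial_pos_real q)
  rw [hqcast, ← one_mul ((mseq M p) ^ (1/(p:ℝ))),
    rpow_log_iff one_pos hmp hmq (by linarith : (0:ℝ) < D)
      (by linarith : (0:ℝ) < Real.exp 1 * B * C) hpPos hqPos]
  have hFp := logfact_ge p
  have hFq := logfact_le hq1
  have hlogq : Real.log (q:ℝ) = Real.log lam + Real.log C + Real.log p := by
    rw [hqdef]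
    push_cast
    rw [Real.log_mul (by positivity) (ne_of_gt hpPos),
      Real.log_mul (ne_of_gt hlamPos) (by positivity)]
  have hmplog : Real.log (mseq M p) = Real.log (M p) - Real.log (p.factorial:ℝ) :=
    Real.log_div (ne_of_gt (hM.1 p)) (ne_of_gt (factorial_pos_real p))
  have hmqlog : Real.log (mseq M q) = Real.log (M q) - Real.log (q.factorial:ℝ) :=
    Real.log_div (ne_of_gt (hM.1 q)) (ne_of_gt (factorial_pos_real q))
  have hE : Real.log (Real.exp 1 * B * C) = 1 + Real.log B + Real.log C := by
    rw [Real.log_mul (by positivity) (by positivity),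
      Real.log_mul (by positivity) (by linarith : B ≠ 0), Real.log_exp]
  rw [hmplog, hmqlog, hE, Real.log_one, sub_div, sub_div]
  have d1 : Real.log p - 1 ≤ Real.log (p.factorial:ℝ)/p := by
    rw [le_div_iff₀ hpPos]; nlinarith [hFp]
  have d2 : Real.log (q.factorial:ℝ)/q ≤ Real.log lam + Real.log C + Real.log p := by
    rw [div_le_iff₀ hqPos]
    rw [hlogq] at hFq
    linarith
  linarith

lemma lemD (hM : IsLC M) (h : Condm M) : CondM M := by
  obtain ⟨C, hC, A, hA, hc⟩ := h
  have hCR : (1:ℝ) ≤ C := by exact_mod_cast hC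
  have he : (2:ℝ) ≤ Real.exp 1 := by nlinarith [Real.add_one_le_exp 1]
  have hEA : (1:ℝ) ≤ Real.exp 1 * A := by nlinarith
  refine ⟨C, hC, Real.exp 1 * A, hEA, fun lam hlam => ?_⟩
  obtain ⟨D, hD1, hD⟩ := hc lam hlam
  refine ⟨D, hD1, fun p hp => ?_⟩
  set q : ℕ := lam * C * p with hqdef
  have hq1 : 1 ≤ q := Nat.one_le_iff_ne_zero.2 (Nat.mul_ne_zero
    (Nat.mul_ne_zero (Nat.one_le_iff_ne_zero.1 hlam) (Nat.one_le_iff_ne_zero.1 hC))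
    (Nat.one_le_iff_ne_zero.1 hp))
  have hpPos : (0:ℝ) < p := by exact_mod_cast hp
  have hqPos : (0:ℝ) < q := by exact_mod_cast hq1
  have hlamPos : (0:ℝ) < lam := by exact_mod_cast hlam
  have hqcast : (lam:ℝ) * C * p = (q:ℝ) := by push_cast [hqdef]; ring
  have hmp : 0 < mseq M p := div_pos (hM.1 p) (factorial_pos_real p)
  have hmq : 0 < mseq M q := div_pos (hM.1 q) (factorial_pos_real q)
  have hDp := hD p hp
  rw [hqcast, ← one_mul ((mseq M p) ^ (1/(p:ℝ)))] at hDp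
  have hlog := (rpow_log_iff one_pos hmp hmq (by linarith : (0:ℝ) < D)
    (by linarith : (0:ℝ) < A) hpPos hqPos).1 hDp
  rw [hqcast, rpow_log_iff hlamPos (hM.1 p) (hM.1 q) (by linarith : (0:ℝ) < D)
    (by linarith : (0:ℝ) < Real.exp 1 * A) hpPos hqPos]
  have hFp := logfact_le hp
  have hFq := logfact_ge q
  have hlogq : Real.log (q:ℝ) = Real.log lam + Real.log C + Real.log p := by
    rw [hqdef]
    push_cast
    rw [Real.log_mul (by positivity) (ne_of_gt hpPos),
      Real.log_mul (ne_of_gt hlamPos) (by positivity)]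
  have hmplog : Real.log (mseq M p) = Real.log (M p) - Real.log (p.factorial:ℝ) :=
    Real.log_div (ne_of_gt (hM.1 p)) (ne_of_gt (factorial_pos_real p))
  have hmqlog : Real.log (mseq M q) = Real.log (M q) - Real.log (q.factorial:ℝ) :=
    Real.log_div (ne_of_gt (hM.1 q)) (ne_of_gt (factorial_pos_real q))
  have hE : Real.log (Real.exp 1 * A) = 1 + Real.log A := by
    rw [Real.log_mul (by positivity) (by linarith : A ≠ 0), Real.log_exp]
  rw [hmplog, hmqlog, Real.log_one, sub_div, sub_div] at hlog
  rw [hE]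
  have d1 : Real.log (p.factorial:ℝ)/p ≤ Real.log p := by
    rw [div_le_iff₀ hpPos]; nlinarith [hFp]
  have d2 : Real.log lam + Real.log C + Real.log p - 1 ≤ Real.log (q.factorial:ℝ)/q := by
    rw [le_div_iff₀ hqPos]
    rw [hlogq] at hFq
    linarith
  have hlogC : 0 ≤ Real.log (C:ℝ) := Real.log_nonneg hCR
  linarith

end S18

/-- Corollary 5.2: characterization of `(α1)` for `ω_M` in terms of `M` resp. `m`. -/
theorem stmt18 (M : ℕ → ℝ) (hM : IsLC M) :
    ((∃ C : ℝ, 1 ≤ C ∧ ∀ lam : ℝ, 1 ≤ lam → ∃ D : ℝ, 1 ≤ D ∧ ∀ t : ℝ, 0 ≤ t →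
        omegaM M (lam * t) ≤ C * lam * omegaM M t + D * lam) ↔
      (∃ C : ℕ, 1 ≤ C ∧ ∃ B : ℝ, 1 ≤ B ∧ ∀ lam : ℕ, 1 ≤ lam → ∃ D : ℝ, 1 ≤ D ∧
        ∀ p : ℕ, 1 ≤ p → (lam : ℝ) * (M p) ^ (1 / (p : ℝ)) ≤
          B * D ^ (1 / (p : ℝ)) * (M (lam * C * p)) ^ (1 / ((lam : ℝ) * C * p)))) ∧
    ((∃ C : ℝ, 1 ≤ C ∧ ∀ lam : ℝ, 1 ≤ lam → ∃ D : ℝ, 1 ≤ D ∧ ∀ t : ℝ, 0 ≤ t →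
        omegaM M (lam * t) ≤ C * lam * omegaM M t + D * lam) ↔
      (∃ C : ℕ, 1 ≤ C ∧ ∃ A : ℝ, 1 ≤ A ∧ ∀ lam : ℕ, 1 ≤ lam → ∃ D : ℝ, 1 ≤ D ∧
        ∀ p : ℕ, 1 ≤ p → (mseq M p) ^ (1 / (p : ℝ)) ≤
          A * D ^ (1 / (p : ℝ)) * (mseq M (lam * C * p)) ^ (1 / ((lam : ℝ) * C * p)))) := by
  constructor
  · exact ⟨fun h => S18.lemA hM h, fun h => S18.lemB hM h⟩
  · exact ⟨fun h => S18.lemC hM (S18.lemA hM h), fun h => S18.lemB hM (S18.lemD hM h)⟩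
end
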